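/- arXiv:0903.4966 — 2 statements merged into one kernel-verified Lean document; each statement's English description precedes it below -/
import Mathlib

section
/- Let k be an algebraically closed field, r ≥ 1, and β : {1,…,r} → {0,1} a block function. If M and M′ are bricks for the cuspidal matrix problem with trace M ≠ trace M′, then the only morphism from M to M′ is the zero matrix S = 0. -/
set_option linter.unusedSectionVars false
set_option linter.unusedVariables false
set_option maxHeartbeats 1600000
namespace CuspAux
variable {k : Type*} [Field k]

def Hm {ι : Type} [Fintype ι] (β : ι → Fin 2) (M M' S : Matrix ι ι k) : Prop :=
  (∀ i j, β i < β j → S i j = 0) ∧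
  (∀ i j, β i ≤ β j → (S * M - M' * S) i j = 0)

def Br {ι : Type} [Fintype ι] [DecidableEq ι] (β : ι → Fin 2) (M : Matrix ι ι k) : Prop :=
  (∀ i j, ¬ β i ≤ β j → M i j = 0) ∧
    ∀ S : Matrix ι ι k, Hm β M M S → ∃ c : k, S = c • (1 : Matrix ι ι k)

def flip2 : Fin 2 → Fin 2 := fun a => if a = 0 then 1 else 0
theorem flip2_le : ∀ a b : Fin 2, flip2 a ≤ flip2 b ↔ b ≤ a := by decide
theorem flip2_lt : ∀ a b : Fin 2, flip2 a < flip2 b ↔ b < a := by decide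
theorem flip2_flip2 : ∀ a : Fin 2, flip2 (flip2 a) = a := by decide
theorem flip2_eq_zero : ∀ a : Fin 2, flip2 a = 0 ↔ a = 1 := by decide
theorem flip2_eq_one : ∀ a : Fin 2, flip2 a = 1 ↔ a = 0 := by decide
theorem fin2_not_le : ∀ a b : Fin 2, ¬ a ≤ b ↔ (a = 1 ∧ b = 0) := by decide
theorem fin2_lt_iff : ∀ a b : Fin 2, a < b ↔ (a = 0 ∧ b = 1) := by decide
theorem fin2_ne_zero : ∀ a : Fin 2, ¬ a = 0 ↔ a = 1 := by decide
theorem fin2_one_le : ∀ a b : Fin 2, a = 1 → a ≤ b → b = 1 := by decide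

section Basic
variable {ι : Type} [Fintype ι] [DecidableEq ι] (β : ι → Fin 2)

theorem sum_split (f : ι → k) :
    ∑ i, f i = (∑ i : {i // β i = 0}, f ↑i) + ∑ i : {i // β i = 1}, f ↑i := by
  classical
  rw [← Finset.sum_filter_add_sum_filter_not Finset.univ (fun i => β i = 0) f]
  congr 1
  · exact Finset.sum_subtype _ (by simp) f
  · refine Finset.sum_subtype _ (fun x => ?_) f
    simp [fin2_ne_zero]

theorem sum_subtype_congr {p q : ι → Prop} [DecidablePred p] [DecidablePred q]
    (h : ∀ i, p i ↔ q i) (f : ι → k) :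
    ∑ i : {i // p i}, f ↑i = ∑ i : {i // q i}, f ↑i :=
  Fintype.sum_equiv (Equiv.subtypeEquivRight h) _ _ (fun x => by simp)

def Bzo (M : Matrix ι ι k) : Matrix {i // β i = 0} {i // β i = 1} k :=
  Matrix.of fun i j => M ↑i ↑j


theorem sup_mul {ρ σ τ : Fin 2 → Fin 2 → Prop} (h : ∀ a b c, ρ a b → σ b c → τ a c)
    {A B : Matrix ι ι k} (hA : ∀ i j, ¬ ρ (β i) (β j) → A i j = 0)
    (hB : ∀ i j, ¬ σ (β i) (β j) → B i j = 0) :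
    ∀ i j, ¬ τ (β i) (β j) → (A * B) i j = 0 := by
  intro i j hij
  rw [Matrix.mul_apply]
  apply Finset.sum_eq_zero
  intro l _
  by_cases hr : ρ (β i) (β l)
  · rw [hB _ _ fun hs => hij (h _ _ _ hr hs), mul_zero]
  · rw [hA _ _ hr, zero_mul]

/-- lower-triangularity as a support statement -/
theorem low_sup {S : Matrix ι ι k} (h : ∀ i j, β i < β j → S i j = 0) :
    ∀ i j, ¬ (β j ≤ β i) → S i j = 0 := fun i j hj => h i j (lt_of_not_ge hj)

theorem Hm_conj {M M' S C Ci D Di : Matrix ι ι k}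
    (hdC : ∀ i j, β i ≠ β j → C i j = 0) (hdCi : ∀ i j, β i ≠ β j → Ci i j = 0)
    (hdD : ∀ i j, β i ≠ β j → D i j = 0) (hdDi : ∀ i j, β i ≠ β j → Di i j = 0)
    (h1 : Ci * C = 1) (h2 : Di * D = 1)
    (hS : Hm β M M' S) : Hm β (C * M * Ci) (D * M' * Di) (D * S * Ci) := by
  obtain ⟨hlow, hcond⟩ := hS
  constructor
  · intro i j hij
    have h1 : ∀ i j, ¬ (β j ≤ β i) → (D * S) i j = 0 :=
      sup_mul β (ρ := fun a b => a = b) (σ := fun a b => b ≤ a) (τ := fun a b => b ≤ a)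
        (fun a b c hab hbc => by rw [hab]; exact hbc) hdD (low_sup β hlow)
    have h2 : ∀ i j, ¬ (β j ≤ β i) → (D * S * Ci) i j = 0 :=
      sup_mul β (ρ := fun a b => b ≤ a) (σ := fun a b => a = b) (τ := fun a b => b ≤ a)
        (fun a b c hab hbc => by rw [← hbc]; exact hab) h1 hdCi
    exact h2 i j (not_le_of_gt hij)
  · intro i j hij
    have key : D * S * Ci * (C * M * Ci) - D * M' * Di * (D * S * Ci)
        = D * (S * M - M' * S) * Ci := by
      have e1 : D * S * Ci * (C * M * Ci) = D * (S * M) * Ci := by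
        rw [show D * S * Ci * (C * M * Ci) = D * S * (Ci * C) * M * Ci by noncomm_ring, h1]
        noncomm_ring
      have e2 : D * M' * Di * (D * S * Ci) = D * (M' * S) * Ci := by
        rw [show D * M' * Di * (D * S * Ci) = D * M' * (Di * D) * S * Ci by noncomm_ring, h2]
        noncomm_ring
      rw [e1, e2]; noncomm_ring
    rw [key]
    have hN : ∀ i' j', ¬ ¬ (β i' ≤ β j') → (S * M - M' * S) i' j' = 0 :=
      fun i' j' h => hcond i' j' (not_not.mp h)
    have hDN : ∀ i' j', ¬ ¬ (β i' ≤ β j') → (D * (S * M - M' * S)) i' j' = 0 :=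
      sup_mul β (ρ := fun a b => a = b) (σ := fun a b => ¬ a ≤ b) (τ := fun a b => ¬ a ≤ b)
        (fun a b c hab hbc => by rw [hab]; exact hbc) hdD hN
    have hDNC : ∀ i' j', ¬ ¬ (β i' ≤ β j') → (D * (S * M - M' * S) * Ci) i' j' = 0 :=
      sup_mul β (ρ := fun a b => ¬ a ≤ b) (σ := fun a b => a = b) (τ := fun a b => ¬ a ≤ b)
        (fun a b c hab hbc => by rw [← hbc]; exact hab) hDN hdCi
    exact hDNC i j (not_not.mpr hij)

theorem Br_conj {M C Ci : Matrix ι ι k}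
    (hdC : ∀ i j, β i ≠ β j → C i j = 0) (hdCi : ∀ i j, β i ≠ β j → Ci i j = 0)
    (h1 : Ci * C = 1) (h1' : C * Ci = 1)
    (hM : Br β M) : Br β (C * M * Ci) := by
  obtain ⟨hadm, hbr⟩ := hM
  constructor
  · have hCM : ∀ i j, ¬ (β i ≤ β j) → (C * M) i j = 0 :=
      sup_mul β (fun a b c hab hbc => by rw [hab]; exact hbc) hdC hadm
    exact sup_mul β (fun a b c hab hbc => by rw [← hbc]; exact hab) hCM hdCi
  · intro T hT
    have hM' : M = Ci * (C * M * Ci) * C := by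
      rw [show Ci * (C * M * Ci) * C = (Ci * C) * M * (Ci * C) by noncomm_ring, h1]
      noncomm_ring
    have hT' : Hm β M M (Ci * T * C) := by
      rw [hM']
      exact Hm_conj β hdCi hdC hdCi hdC h1' h1' hT
    obtain ⟨c, hc⟩ := hbr _ hT'
    refine ⟨c, ?_⟩
    have : C * (Ci * T * C) * Ci = T := by
      rw [show C * (Ci * T * C) * Ci = (C * Ci) * T * (C * Ci) by noncomm_ring, h1']
      noncomm_ring
    rw [← this, hc]
    rw [Matrix.mul_smul, Matrix.smul_mul, mul_one, h1']

theorem trace_conj {M C Ci : Matrix ι ι k} (h1 : Ci * C = 1) :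
    (C * M * Ci).trace = M.trace := by
  rw [Matrix.trace_mul_cycle, h1, Matrix.one_mul]


theorem Hm_transpose {M M' S : Matrix ι ι k} (hS : Hm β M M' S) :
    Hm (flip2 ∘ β) M'.transpose M.transpose S.transpose := by
  obtain ⟨hlow, hcond⟩ := hS
  constructor
  · intro i j hij
    simp only [Function.comp_apply, flip2_lt] at hij
    exact hlow j i hij
  · intro i j hij
    simp only [Function.comp_apply, flip2_le] at hij
    have key : (S.transpose * M'.transpose - M.transpose * S.transpose) i j
        = -((S * M - M' * S) j i) := by
      simp [Matrix.mul_apply, Matrix.transpose_apply, Finset.sum_sub_distrib, mul_comm]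
    rw [key, hcond j i hij, neg_zero]

theorem Br_transpose {M : Matrix ι ι k} (hM : Br β M) : Br (flip2 ∘ β) M.transpose := by
  obtain ⟨hadm, hbr⟩ := hM
  constructor
  · intro i j hij
    simp only [Function.comp_apply, flip2_le] at hij
    exact hadm j i hij
  · intro T hT
    have hTT := Hm_transpose (flip2 ∘ β) hT
    have hββ : flip2 ∘ (flip2 ∘ β) = β := by
      funext i; exact flip2_flip2 (β i)
    rw [hββ, Matrix.transpose_transpose] at hTT
    obtain ⟨c, hc⟩ := hbr _ hTT
    refine ⟨c, ?_⟩
    have := congrArg Matrix.transpose hc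
    rwa [Matrix.transpose_transpose, Matrix.transpose_smul, Matrix.transpose_one] at this

/-- the constant-β case -/
theorem const_case {M M' S : Matrix ι ι k} (hc : ∀ i j : ι, β i = β j)
    (hM : Br β M) (hM' : Br β M') (htr : M.trace ≠ M'.trace) (hS : Hm β M M' S) :
    S = 0 := by
  have hMe : Hm β M M M := by
    refine ⟨fun i j hij => absurd hij (by rw [hc i j]; exact lt_irrefl _), fun i j _ => by simp⟩
  have hM'e : Hm β M' M' M' := by
    refine ⟨fun i j hij => absurd hij (by rw [hc i j]; exact lt_irrefl _), fun i j _ => by simp⟩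
  obtain ⟨c, hcM⟩ := hM.2 _ hMe
  obtain ⟨c', hcM'⟩ := hM'.2 _ hM'e
  have hcc : c ≠ c' := by
    intro h
    apply htr
    rw [hcM, hcM', h]
  funext i j
  have h2 := hS.2 i j (le_of_eq (hc i j))
  rw [hcM, hcM'] at h2
  have : (c - c') * S i j = 0 := by
    simpa [Matrix.sub_apply, Matrix.smul_apply, sub_mul] using h2
  have := mul_eq_zero.mp this
  rcases this with h | h
  · exact absurd (sub_eq_zero.mp h) hcc
  · exact h


theorem brick_dichotomy {M : Matrix ι ι k} (hM : Br β M) :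
    Function.Injective (Bzo β M).mulVec ∨
      Function.Injective (Bzo (flip2 ∘ β) M.transpose).mulVec := by
  by_contra hcon
  push_neg at hcon
  obtain ⟨h1, h2⟩ := hcon
  have h1' : ¬ Function.Injective ⇑(Bzo β M).mulVecLin := by
    exact h1
  have h2' : ¬ Function.Injective ⇑(Bzo (flip2 ∘ β) M.transpose).mulVecLin := by
    exact h2
  rw [← LinearMap.ker_eq_bot] at h1' h2'
  obtain ⟨z, hz, hz0⟩ := (Submodule.ne_bot_iff _).mp h1'
  obtain ⟨w, hw, hw0⟩ := (Submodule.ne_bot_iff _).mp h2'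
  rw [LinearMap.mem_ker] at hz hw
  -- pass to total functions
  set z' : ι → k := fun i => if h : β i = 1 then z ⟨i, h⟩ else 0 with hz'def
  set w' : ι → k := fun j => if h : β j = 0 then w ⟨j, (flip2_eq_one (β j)).mpr h⟩ else 0
    with hw'def
  have hz'val : ∀ l : {i // β i = 1}, z' ↑l = z l := by
    intro l; rw [hz'def]; simp only; rw [dif_pos l.2]
  have hw'val : ∀ l : {i // (flip2 ∘ β) i = 1}, w' ↑l = w l := by
    intro l
    rw [hw'def]; simp only
    rw [dif_pos ((flip2_eq_one (β ↑l)).mp l.2)]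
  set S : Matrix ι ι k := Matrix.of fun i j =>
    if β i = 1 ∧ β j = 0 then z' i * w' j else 0 with hSdef
  have hzeq : ∀ i : ι, β i = 0 → ∑ l : {i // β i = 1}, M i ↑l * z' ↑l = 0 := by
    intro i hi
    have := congrFun hz ⟨i, hi⟩
    simp only [Matrix.mulVecLin, Matrix.mulVec, dotProduct, Bzo] at this
    rw [show (0 : {i // β i = 0} → k) ⟨i, hi⟩ = 0 from rfl] at this
    rw [← this]
    apply Finset.sum_congr rfl
    intro l _
    rw [hz'val l]
    rfl
  have hweq : ∀ j : ι, β j = 1 → ∑ l : {i // β i = 0}, M ↑l j * w' ↑l = 0 := by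
    intro j hj
    have := congrFun hw ⟨j, (flip2_eq_zero (β j)).mpr hj⟩
    simp only [Matrix.mulVecLin, Matrix.mulVec, dotProduct, Bzo] at this
    rw [show (0 : {i // (flip2 ∘ β) i = 0} → k) ⟨j, _⟩ = 0 from rfl] at this
    rw [← sum_subtype_congr (fun l => by
        simpa using (flip2_eq_one (β l)) : ∀ l, (flip2 ∘ β) l = 1 ↔ β l = 0)
      (fun l => M l j * w' l), ← this]
    apply Finset.sum_congr rfl
    intro l _
    rw [hw'val l]
    rfl
  have hSHm : Hm β M M S := by
    constructor
    · intro i j hij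
      rw [fin2_lt_iff] at hij
      simp only [hSdef, Matrix.of_apply]
      rw [if_neg]
      rintro ⟨ha, hb⟩
      rw [hij.1] at ha
      exact absurd ha (by decide)
    · intro i j hij
      simp only [Matrix.sub_apply, Matrix.mul_apply]
      by_cases hbi : β i = 1
      · have hbj : β j = 1 := fin2_one_le _ _ hbi hij
        have e2 : ∑ l, M i l * S l j = 0 := by
          apply Finset.sum_eq_zero
          intro l _
          have : S l j = 0 := by
            simp only [hSdef, Matrix.of_apply]
            rw [if_neg]
            rintro ⟨_, hb⟩
            rw [hbj] at hb; exact absurd hb (by decide)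
          rw [this, mul_zero]
        have e1 : ∑ l, S i l * M l j = 0 := by
          rw [sum_split β]
          have ha : ∑ l : {l // β l = 0}, S i ↑l * M ↑l j
              = z' i * ∑ l : {l // β l = 0}, (M ↑l j * w' ↑l) := by
            rw [Finset.mul_sum]
            apply Finset.sum_congr rfl
            intro l _
            simp only [hSdef, Matrix.of_apply]
            rw [if_pos ⟨hbi, l.2⟩]
            ring
          have hb : ∑ l : {l // β l = 1}, S i ↑l * M ↑l j = 0 := by
            apply Finset.sum_eq_zero
            intro l _
            simp only [hSdef, Matrix.of_apply]
            rw [if_neg]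
            · ring
            rintro ⟨_, hb⟩
            have := l.2
            rw [this] at hb; exact absurd hb (by decide)
          rw [ha, hb, add_zero, hweq j hbj, mul_zero]
        rw [e1, e2]; ring
      · have hbi0 : β i = 0 := by
          by_contra hne
          exact hbi ((fin2_ne_zero (β i)).mp hne)
        have e1 : ∑ l, S i l * M l j = 0 := by
          apply Finset.sum_eq_zero
          intro l _
          have : S i l = 0 := by
            simp only [hSdef, Matrix.of_apply]
            rw [if_neg]
            rintro ⟨ha, _⟩
            rw [hbi0] at ha; exact absurd ha (by decide)
          rw [this, zero_mul]
        by_cases hbj : β j = 0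
        · have e2 : ∑ l, M i l * S l j = 0 := by
            rw [sum_split β]
            have ha : ∑ l : {l // β l = 0}, M i ↑l * S ↑l j = 0 := by
              apply Finset.sum_eq_zero
              intro l _
              simp only [hSdef, Matrix.of_apply]
              rw [if_neg]
              · ring
              rintro ⟨ha, _⟩
              have := l.2
              rw [this] at ha; exact absurd ha (by decide)
            have hb : ∑ l : {l // β l = 1}, M i ↑l * S ↑l j
                = (∑ l : {l // β l = 1}, M i ↑l * z' ↑l) * w' j := by
              rw [Finset.sum_mul]
              apply Finset.sum_congr rfl
              intro l _
              simp only [hSdef, Matrix.of_apply]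
              rw [if_pos ⟨l.2, hbj⟩]
              ring
            rw [ha, hb, zero_add, hzeq i hbi0, zero_mul]
          rw [e1, e2]; ring
        · have hbj1 : β j = 1 := (fin2_ne_zero (β j)).mp hbj
          have e2 : ∑ l, M i l * S l j = 0 := by
            apply Finset.sum_eq_zero
            intro l _
            have : S l j = 0 := by
              simp only [hSdef, Matrix.of_apply]
              rw [if_neg]
              rintro ⟨_, hb⟩
              rw [hbj1] at hb; exact absurd hb (by decide)
            rw [this, mul_zero]
          rw [e1, e2]; ring
  obtain ⟨c, hc⟩ := hM.2 _ hSHm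
  obtain ⟨iz, hiz⟩ : ∃ a, z a ≠ 0 := by
    by_contra h; push_neg at h; exact hz0 (funext h)
  obtain ⟨jw, hjw⟩ : ∃ a, w a ≠ 0 := by
    by_contra h; push_neg at h; exact hw0 (funext h)
  have hjw0 : β ↑jw = 0 := (flip2_eq_one (β ↑jw)).mp jw.2
  have hne : (↑iz : ι) ≠ ↑jw := by
    intro h
    have := iz.2
    rw [h, hjw0] at this
    exact absurd this (by decide)
  have hS0 : S ↑iz ↑jw = 0 := by
    rw [hc]
    simp [Matrix.one_apply_ne hne]
  simp only [hSdef, Matrix.of_apply] at hS0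
  rw [if_pos ⟨iz.2, hjw0⟩] at hS0
  rcases mul_eq_zero.mp hS0 with h | h
  · rw [hz'val iz] at h; exact hiz h
  · rw [hw'val jw] at h; exact hjw h


end Basic


theorem card_le_of_inj {α γ : Type} [Fintype α] [Fintype γ] [DecidableEq α] [DecidableEq γ]
    (N : Matrix α γ k) (h : Function.Injective N.mulVec) :
    Fintype.card γ ≤ Fintype.card α := by
  have h' : Function.Injective ⇑N.mulVecLin := by exact h
  have := LinearMap.finrank_le_finrank_of_injective h'
  simpa [Module.finrank_pi] using this

theorem inj_transpose_of_inj {α γ : Type} [Fintype α] [Fintype γ] [DecidableEq α] [DecidableEq γ]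
    (N : Matrix α γ k) (hcard : Fintype.card α = Fintype.card γ)
    (h : Function.Injective N.mulVec) : Function.Injective N.transpose.mulVec := by
  -- N.mulVecLin is surjective
  have hinj : Function.Injective ⇑N.mulVecLin := by exact h
  have hsurj : Function.Surjective ⇑N.mulVecLin := by
    have e : (α → k) ≃ₗ[k] (γ → k) :=
      LinearEquiv.funCongrLeft k k (Fintype.equivOfCardEq hcard).symm
    have hgi : Function.Injective ⇑(e.toLinearMap ∘ₗ N.mulVecLin) := by
      simp only [LinearMap.coe_comp, LinearEquiv.coe_coe]
      exact e.injective.comp hinj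
    have hgs := (LinearMap.injective_iff_surjective).mp hgi
    intro y
    obtain ⟨x, hx⟩ := hgs (e y)
    exact ⟨x, by
      have : e (N.mulVecLin x) = e y := hx
      exact e.injective this⟩
  intro u v huv
  have key : ∀ d : α → k, N.transpose.mulVec d = 0 → d = 0 := by
    intro d hd
    funext a
    have h1 : ∀ x : γ → k, dotProduct d (N.mulVec x) = 0 := by
      intro x
      rw [Matrix.dotProduct_mulVec]
      have : Matrix.vecMul d N = N.transpose.mulVec d := (Matrix.mulVec_transpose N d).symm
      rw [this, hd]
      simp [dotProduct]
    have h2 : ∀ y : α → k, dotProduct d y = 0 := by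
      intro y
      obtain ⟨x, hx⟩ := hsurj y
      have : N.mulVecLin x = N.mulVec x := rfl
      rw [← hx, this]
      exact h1 x
    have := h2 (Pi.single a 1)
    simpa [dotProduct, Pi.single_apply, Finset.sum_ite_eq'] using this
  have : N.transpose.mulVec (u - v) = 0 := by
    have hlin : N.transpose.mulVecLin (u - v) = 0 := by
      rw [map_sub]
      have : N.transpose.mulVecLin u = N.transpose.mulVecLin v := huv
      rw [this, sub_self]
    exact hlin
  have := key _ this
  exact sub_eq_zero.mp this

theorem inj_submatrix {α γ α' γ' : Type} [Fintype α] [Fintype γ] [Fintype α'] [Fintype γ']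
    (A : Matrix α γ k) (e1 : α' ≃ α) (e2 : γ' ≃ γ)
    (h : Function.Injective A.mulVec) : Function.Injective (A.submatrix ⇑e1 ⇑e2).mulVec := by
  intro u v huv
  have h1 : A.mulVec (u ∘ ⇑e2.symm) ∘ ⇑e1 = A.mulVec (v ∘ ⇑e2.symm) ∘ ⇑e1 := by
    rw [← Matrix.submatrix_mulVec_equiv, ← Matrix.submatrix_mulVec_equiv]
    exact huv
  have h2 : A.mulVec (u ∘ ⇑e2.symm) = A.mulVec (v ∘ ⇑e2.symm) := by
    funext a
    have := congrFun h1 (e1.symm a)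
    simpa using this
  have h3 := h h2
  funext King
  have := congrFun h3 (e2 King)
  simpa using this

theorem exists_aut {V W : Type*} [AddCommGroup V] [Module k V] [AddCommGroup W] [Module k W]
    [FiniteDimensional k V] (f g : W →ₗ[k] V)
    (hf : Function.Injective f) (hg : Function.Injective g) :
    ∃ u : V ≃ₗ[k] V, ∀ x, u (f x) = g x := by
  obtain ⟨C1, hC1⟩ := Submodule.exists_isCompl (LinearMap.range f)
  obtain ⟨C2, hC2⟩ := Submodule.exists_isCompl (LinearMap.range g)
  have hfin : Module.finrank k (LinearMap.range f) = Module.finrank k (LinearMap.range g) := by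
    rw [← LinearEquiv.finrank_eq (LinearEquiv.ofInjective f hf),
        ← LinearEquiv.finrank_eq (LinearEquiv.ofInjective g hg)]
  have hC : Module.finrank k C1 = Module.finrank k C2 := by
    have a1 := Submodule.finrank_add_eq_of_isCompl hC1
    have a2 := Submodule.finrank_add_eq_of_isCompl hC2
    omega
  obtain ⟨e3⟩ := FiniteDimensional.nonempty_linearEquiv_of_finrank_eq hC
  set rfg : (LinearMap.range f) ≃ₗ[k] (LinearMap.range g) :=
    (LinearEquiv.ofInjective f hf).symm.trans (LinearEquiv.ofInjective g hg) with hrfg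
  set u : V ≃ₗ[k] V :=
    ((Submodule.prodEquivOfIsCompl _ _ hC1).symm.trans
      ((rfg.prodCongr e3).trans (Submodule.prodEquivOfIsCompl _ _ hC2))) with hu
  refine ⟨u, fun x => ?_⟩
  have h1 : (Submodule.prodEquivOfIsCompl _ _ hC1).symm (f x)
      = (⟨f x, LinearMap.mem_range_self f x⟩, 0) := by
    exact Submodule.prodEquivOfIsCompl_symm_apply_left _ _ hC1 ⟨f x, LinearMap.mem_range_self f x⟩
  rw [hu]
  simp only [LinearEquiv.trans_apply, h1, LinearEquiv.prodCongr_apply]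
  have h2 : rfg ⟨f x, LinearMap.mem_range_self f x⟩ = ⟨g x, LinearMap.mem_range_self g x⟩ := by
    rw [hrfg]
    simp only [LinearEquiv.trans_apply]
    have : (LinearEquiv.ofInjective f hf).symm ⟨f x, LinearMap.mem_range_self f x⟩ = x := by
      apply hf
      exact LinearEquiv.ofInjective_symm_apply f ⟨f x, LinearMap.mem_range_self f x⟩
    rw [this]
    rfl
  rw [h2, map_zero]
  simp [Submodule.coe_prodEquivOfIsCompl]


section Emb
variable {ι : Type} [Fintype ι] [DecidableEq ι] (β : ι → Fin 2)


/-- extend a matrix on the β=0 block by the identity -/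
def Emb (P : Matrix {i // β i = 0} {i // β i = 0} k) : Matrix ι ι k :=
  Matrix.of fun i j =>
    if h : β i = 0 ∧ β j = 0 then P ⟨i, h.1⟩ ⟨j, h.2⟩ else if i = j then 1 else 0

theorem Emb_diag (P : Matrix {i // β i = 0} {i // β i = 0} k) :
    ∀ i j, β i ≠ β j → Emb β P i j = 0 := by
  intro i j hij
  simp only [Emb, Matrix.of_apply]
  rw [dif_neg, if_neg]
  · rintro rfl; exact hij rfl
  · rintro ⟨h1, h2⟩; rw [h1, h2] at hij; exact hij rfl

theorem Emb_one : Emb β (1 : Matrix {i // β i = 0} {i // β i = 0} k) = 1 := by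
  funext i j
  simp only [Emb, Matrix.of_apply]
  by_cases h : β i = 0 ∧ β j = 0
  · rw [dif_pos h]
    by_cases hij : i = j
    · subst hij; simp [Matrix.one_apply]
    · rw [Matrix.one_apply_ne hij, Matrix.one_apply_ne (fun hc => hij (Subtype.ext_iff.mp hc))]
  · rw [dif_neg h]
    by_cases hij : i = j
    · subst hij; simp [Matrix.one_apply]
    · rw [if_neg hij, Matrix.one_apply_ne hij]

theorem Emb_mul (P Q : Matrix {i // β i = 0} {i // β i = 0} k) :
    Emb β P * Emb β Q = Emb β (P * Q) := by
  funext i j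
  rw [Matrix.mul_apply, sum_split β]
  by_cases hi : β i = 0 <;> by_cases hj : β j = 0
  · have h1 : ∑ l : {l // β l = 1}, Emb β P i ↑l * Emb β Q ↑l j = 0 := by
      apply Finset.sum_eq_zero
      intro l _
      have : Emb β P i ↑l = 0 := Emb_diag β P i ↑l (by rw [hi, l.2]; decide)
      rw [this, zero_mul]
    have h2 : ∑ l : {l // β l = 0}, Emb β P i ↑l * Emb β Q ↑l j
        = ∑ l : {l // β l = 0}, P ⟨i, hi⟩ l * Q l ⟨j, hj⟩ := by
      apply Finset.sum_congr rfl
      intro l _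
      simp only [Emb, Matrix.of_apply]
      rw [dif_pos ⟨hi, l.2⟩, dif_pos ⟨l.2, hj⟩]
    rw [h1, h2, add_zero]
    simp only [Emb, Matrix.of_apply]
    rw [dif_pos ⟨hi, hj⟩, Matrix.mul_apply]
  · have hj1 : β j = 1 := by omega
    have h1 : ∑ l : {l // β l = 0}, Emb β P i ↑l * Emb β Q ↑l j = 0 := by
      apply Finset.sum_eq_zero
      intro l _
      have : Emb β Q ↑l j = 0 := Emb_diag β Q ↑l j (by rw [hj1, l.2]; decide)
      rw [this, mul_zero]
    have h2 : ∑ l : {l // β l = 1}, Emb β P i ↑l * Emb β Q ↑l j = 0 := by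
      apply Finset.sum_eq_zero
      intro l _
      have : Emb β P i ↑l = 0 := Emb_diag β P i ↑l (by rw [hi, l.2]; decide)
      rw [this, zero_mul]
    rw [h1, h2, add_zero]
    have := Emb_diag β (P * Q) i j (by rw [hi, hj1]; decide)
    rw [this]
  · have hi1 : β i = 1 := by omega
    have h1 : ∑ l : {l // β l = 0}, Emb β P i ↑l * Emb β Q ↑l j = 0 := by
      apply Finset.sum_eq_zero
      intro l _
      have : Emb β P i ↑l = 0 := Emb_diag β P i ↑l (by rw [hi1, l.2]; decide)
      rw [this, zero_mul]
    have h2 : ∑ l : {l // β l = 1}, Emb β P i ↑l * Emb β Q ↑l j = 0 := by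
      apply Finset.sum_eq_zero
      intro l _
      have : Emb β Q ↑l j = 0 := Emb_diag β Q ↑l j (by rw [hj, l.2]; decide)
      rw [this, mul_zero]
    rw [h1, h2, add_zero]
    have := Emb_diag β (P * Q) i j (by rw [hi1, hj]; decide)
    rw [this]
  · have hi1 : β i = 1 := by omega
    have hj1 : β j = 1 := by omega
    have h1 : ∑ l : {l // β l = 0}, Emb β P i ↑l * Emb β Q ↑l j = 0 := by
      apply Finset.sum_eq_zero
      intro l _
      have : Emb β P i ↑l = 0 := Emb_diag β P i ↑l (by rw [hi1, l.2]; decide)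
      rw [this, zero_mul]
    have h2 : ∑ l : {l // β l = 1}, Emb β P i ↑l * Emb β Q ↑l j
        = if i = j then 1 else 0 := by
      have hterm : ∀ l : {l // β l = 1}, Emb β P i ↑l * Emb β Q ↑l j
          = if i = ↑l then (if (↑l : ι) = j then 1 else 0) else 0 := by
        intro l
        simp only [Emb, Matrix.of_apply]
        rw [dif_neg (by rw [hi1]; rintro ⟨h, _⟩; exact absurd h (by decide)),
            dif_neg (by rw [l.2]; rintro ⟨h, _⟩; exact absurd h (by decide))]
        by_cases h : i = ↑l <;> simp [h]
      calc ∑ l : {l // β l = 1}, Emb β P i ↑l * Emb β Q ↑l j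
          = ∑ l : {l // β l = 1}, if i = ↑l then (if (↑l : ι) = j then 1 else 0) else 0 :=
            Finset.sum_congr rfl (fun l _ => hterm l)
        _ = if i = j then 1 else 0 := by
            rw [Finset.sum_eq_single (⟨i, hi1⟩ : {l // β l = 1})]
            · simp
            · intro b _ hb
              rw [if_neg]
              intro hc
              exact hb (Subtype.ext hc.symm)
            · intro h
              exact absurd (Finset.mem_univ _) h
    rw [h1, h2, zero_add]
    simp only [Emb, Matrix.of_apply]
    rw [dif_neg (by rw [hi1]; rintro ⟨h, _⟩; exact absurd h (by decide))]

theorem mul_Emb_right_col1 (Q : Matrix {i // β i = 0} {i // β i = 0} k)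
    (A : Matrix ι ι k) {i j : ι} (hj : β j = 1) : (A * Emb β Q) i j = A i j := by
  rw [Matrix.mul_apply, sum_split β]
  have h1 : ∑ l : {l // β l = 0}, A i ↑l * Emb β Q ↑l j = 0 := by
    apply Finset.sum_eq_zero
    intro l _
    have : Emb β Q ↑l j = 0 := Emb_diag β Q ↑l j (by rw [hj, l.2]; decide)
    rw [this, mul_zero]
  have h2 : ∑ l : {l // β l = 1}, A i ↑l * Emb β Q ↑l j = A i j := by
    have hterm : ∀ l : {l // β l = 1}, A i ↑l * Emb β Q ↑l j
        = if (↑l : ι) = j then A i ↑l else 0 := by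
      intro l
      simp only [Emb, Matrix.of_apply]
      rw [dif_neg (by rw [l.2]; rintro ⟨h, _⟩; exact absurd h (by decide))]
      by_cases h : (↑l : ι) = j <;> simp [h]
    rw [Finset.sum_congr rfl (fun l _ => hterm l),
        Finset.sum_eq_single (⟨j, hj⟩ : {l // β l = 1})]
    · simp
    · intro b _ hb
      rw [if_neg (fun hc => hb (Subtype.ext hc))]
    · intro h
      exact absurd (Finset.mem_univ _) h
  rw [h1, h2, zero_add]

theorem Emb_mul_left_row0 (P : Matrix {i // β i = 0} {i // β i = 0} k)
    (A : Matrix ι ι k) {i : ι} (j : ι) (hi : β i = 0) :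
    (Emb β P * A) i j = ∑ l : {l // β l = 0}, P ⟨i, hi⟩ l * A ↑l j := by
  rw [Matrix.mul_apply, sum_split β]
  have h1 : ∑ l : {l // β l = 1}, Emb β P i ↑l * A ↑l j = 0 := by
    apply Finset.sum_eq_zero
    intro l _
    have : Emb β P i ↑l = 0 := Emb_diag β P i ↑l (by rw [hi, l.2]; decide)
    rw [this, zero_mul]
  have h2 : ∑ l : {l // β l = 0}, Emb β P i ↑l * A ↑l j
      = ∑ l : {l // β l = 0}, P ⟨i, hi⟩ l * A ↑l j := by
    apply Finset.sum_congr rfl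
    intro l _
    simp only [Emb, Matrix.of_apply]
    rw [dif_pos ⟨hi, l.2⟩]
  rw [h1, h2, add_zero]


end Emb


section N
variable {ι : Type} [Fintype ι] [DecidableEq ι] (β : ι → Fin 2)


/-- canonical inclusion matrix attached to an embedding φ -/
def Eph (φ : {i // β i = 1} ↪ {i // β i = 0}) :
    Matrix {i // β i = 0} {i // β i = 1} k :=
  Matrix.of fun i b => if i = φ b then 1 else 0

theorem Eph_inj (φ : {i // β i = 1} ↪ {i // β i = 0}) :
    Function.Injective (Eph β φ : Matrix _ _ k).mulVecLin := by
  rw [← LinearMap.ker_eq_bot, Submodule.eq_bot_iff]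
  intro z hz
  rw [LinearMap.mem_ker] at hz
  have hz' : (Eph β φ : Matrix _ _ k).mulVec z = 0 := hz
  funext b
  have hval : (Eph β φ : Matrix _ _ k).mulVec z (φ b) = z b := by
    simp only [Matrix.mulVec, dotProduct, Eph, Matrix.of_apply]
    rw [Finset.sum_eq_single b]
    · simp
    · intro c _ hc
      rw [if_neg (fun h => hc (φ.injective h.symm)), zero_mul]
    · intro h; exact absurd (Finset.mem_univ _) h
  have := congrFun hz' (φ b)
  rw [hval] at this
  simpa using this

theorem exists_normalizer {M : Matrix ι ι k}
    (hinj : Function.Injective (Bzo β M).mulVec) (φ : {i // β i = 1} ↪ {i // β i = 0}) :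
    ∃ C Ci : Matrix ι ι k,
      (∀ i j, β i ≠ β j → C i j = 0) ∧ (∀ i j, β i ≠ β j → Ci i j = 0) ∧
      C * Ci = 1 ∧ Ci * C = 1 ∧
      ∀ (i j : ι) (h0 : β i = 0) (h1 : β j = 1),
        (C * M * Ci) i j = if (⟨i, h0⟩ : {i // β i = 0}) = φ ⟨j, h1⟩ then (1 : k) else 0 := by
  have hinj' : Function.Injective ⇑(Bzo β M).mulVecLin := by
    exact hinj
  obtain ⟨u, hu⟩ := exists_aut ((Bzo β M).mulVecLin) ((Eph β φ).mulVecLin) hinj' (Eph_inj β φ)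
  set P := LinearMap.toMatrix' u.toLinearMap with hP
  set Pi := LinearMap.toMatrix' u.symm.toLinearMap with hPi
  have hPPi : P * Pi = 1 := by
    rw [hP, hPi, ← LinearMap.toMatrix'_comp, ← LinearMap.toMatrix'_id]
    congr 1
    apply LinearMap.ext
    intro x
    simp
  have hPiP : Pi * P = 1 := by
    rw [hP, hPi, ← LinearMap.toMatrix'_comp, ← LinearMap.toMatrix'_id]
    congr 1
    apply LinearMap.ext
    intro x
    simp
  have hPB : P * (Bzo β M) = Eph β φ := by
    apply Matrix.toLin'.injective
    apply LinearMap.ext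
    intro v
    rw [Matrix.toLin'_mul]
    simp only [LinearMap.coe_comp, Function.comp_apply]
    have h1 : Matrix.toLin' P = u.toLinearMap := by
      rw [hP, Matrix.toLin'_toMatrix']
    have h2 : ∀ w, Matrix.toLin' (Bzo β M) w = (Bzo β M).mulVecLin w := fun w => rfl
    have h3 : ∀ w, Matrix.toLin' (Eph β φ : Matrix _ _ k) w = (Eph β φ).mulVecLin w :=
      fun w => rfl
    rw [h1, h2, h3]
    exact hu v
  refine ⟨Emb β P, Emb β Pi, Emb_diag β P, Emb_diag β Pi, ?_, ?_, ?_⟩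
  · rw [Emb_mul, hPPi, Emb_one]
  · rw [Emb_mul, hPiP, Emb_one]
  · intro i j h0 h1
    rw [mul_Emb_right_col1 β Pi _ h1, Emb_mul_left_row0 β P M j h0]
    have : ∑ l : {l // β l = 0}, P ⟨i, h0⟩ l * M ↑l j
        = (P * Bzo β M) ⟨i, h0⟩ ⟨j, h1⟩ := by
      rw [Matrix.mul_apply]
      rfl
    rw [this, hPB]
    rfl

end N


section Red
variable {ι : Type} [Fintype ι] [DecidableEq ι] (β : ι → Fin 2)
  (φ : {i // β i = 1} ↪ {i // β i = 0})


open Classical in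
noncomputable def bred : {i // β i = 0} → Fin 2 := fun i => if ∃ b, φ b = i then 1 else 0

theorem bred_one {i : {i // β i = 0}} (h : ∃ b, φ b = i) : bred β φ i = 1 := by
  rw [bred]; exact if_pos h

theorem bred_zero {i : {i // β i = 0}} (h : ¬ ∃ b, φ b = i) : bred β φ i = 0 := by
  rw [bred]; exact if_neg h

theorem bred_cases (i : {i // β i = 0}) :
    (∃ b, φ b = i) ∨ (¬ (∃ b, φ b = i) ∧ bred β φ i = 0) := by
  by_cases h : ∃ b, φ b = i
  · exact Or.inl h
  · exact Or.inr ⟨h, bred_zero β φ h⟩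

noncomputable def psi (i : {i // β i = 0}) (h : ∃ b, φ b = i) : {i // β i = 1} := h.choose

theorem phi_psi (i : {i // β i = 0}) (h : ∃ b, φ b = i) : φ (psi β φ i h) = i := h.choose_spec

theorem psi_phi (b : {i // β i = 1}) (h : ∃ c, φ c = φ b) : psi β φ (φ b) h = b :=
  φ.injective (phi_psi β φ (φ b) h)

/-- the reduced matrix -/
noncomputable def Mred (M : Matrix ι ι k) :
    Matrix {i // β i = 0} {i // β i = 0} k :=
  Matrix.of fun i j =>
    if hi : ∃ b, φ b = i then
      (if hj : ∃ b, φ b = j then M ↑i ↑j + M ↑(psi β φ i hi) ↑(psi β φ j hj) else 0)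
    else M ↑i ↑j

def Sres (S : Matrix ι ι k) : Matrix {i // β i = 0} {i // β i = 0} k :=
  Matrix.of fun i j => S ↑i ↑j

/-- summation over the reduced index set splits along the range of φ -/
theorem sum_ran_split (f : {i // β i = 0} → k) :
    ∑ i, f i = (∑ i : {x : {i // β i = 0} // ¬ ∃ b, φ b = x}, f ↑i)
      + ∑ b : {i // β i = 1}, f (φ b) := by
  classical
  rw [← Finset.sum_filter_add_sum_filter_not Finset.univ (fun x => ∃ b, φ b = x) f,
      add_comm]
  congr 1
  · exact Finset.sum_subtype _ (by simp) f
  · rw [Finset.sum_subtype (p := fun x => ∃ b, φ b = x) _ (by simp) f]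
    set e : {i // β i = 1} ≃ {x : {i // β i = 0} // ∃ b, φ b = x} :=
      { toFun := fun b => ⟨φ b, ⟨b, rfl⟩⟩
        invFun := fun x => psi β φ ↑x x.2
        left_inv := fun b => psi_phi β φ b _
        right_inv := fun x => Subtype.ext (phi_psi β φ ↑x x.2) } with he
    exact (Equiv.sum_comp e (fun x => f ↑x)).symm

section Norm
variable {M M' S : Matrix ι ι k}

/-- normalization of the B block -/
def Norm (M : Matrix ι ι k) : Prop :=
  ∀ (i j : ι) (h0 : β i = 0) (h1 : β j = 1),
    M i j = if (⟨i, h0⟩ : {i // β i = 0}) = φ ⟨j, h1⟩ then (1 : k) else 0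

theorem norm_val (hN : Norm β φ M) (i : {i // β i = 0}) (b : {i // β i = 1}) :
    M ↑i ↑b = if i = φ b then 1 else 0 := by
  have := hN ↑i ↑b i.2 b.2
  simpa using this

theorem sum_norm_right (hN : Norm β φ M) (i : {i // β i = 0}) (X : {l // β l = 1} → k) :
    ∑ l : {l // β l = 1}, M ↑i ↑l * X l
      = if h : ∃ b, φ b = i then X (psi β φ i h) else 0 := by
  by_cases h : ∃ b, φ b = i
  · rw [dif_pos h, Finset.sum_eq_single (psi β φ i h)]
    · rw [norm_val β φ hN, if_pos (phi_psi β φ i h).symm, one_mul]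
    · intro c _ hc
      rw [norm_val β φ hN, if_neg, zero_mul]
      intro hh
      exact hc (φ.injective (by rw [phi_psi β φ i h]; exact hh.symm))
    · intro hh; exact absurd (Finset.mem_univ _) hh
  · rw [dif_neg h]
    apply Finset.sum_eq_zero
    intro c _
    rw [norm_val β φ hN, if_neg, zero_mul]
    intro hh
    exact h ⟨c, hh.symm⟩

theorem sum_norm_col (hN : Norm β φ M) (b : {i // β i = 1}) (X : {i // β i = 0} → k) :
    ∑ l : {l // β l = 0}, X l * M ↑l ↑b = X (φ b) := by
  rw [Finset.sum_eq_single (φ b)]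
  · rw [norm_val β φ hN, if_pos rfl, mul_one]
  · intro c _ hc
    rw [norm_val β φ hN, if_neg hc, mul_zero]
  · intro hh; exact absurd (Finset.mem_univ _) hh

/-- lower-triangularity of S across blocks -/
theorem S_low_block (hS : Hm β M M' S) (i : {i // β i = 0}) (b : {i // β i = 1}) :
    S ↑i ↑b = 0 :=
  hS.1 ↑i ↑b (by rw [i.2, b.2]; decide)

/-- the key structure lemma for morphisms between normalized matrices -/
theorem Cb (hNM : Norm β φ M) (hNM' : Norm β φ M') (hS : Hm β M M' S)
    (i : {i // β i = 0}) (b : {i // β i = 1}) :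
    S ↑i ↑(φ b) = if h : ∃ c, φ c = i then S ↑(psi β φ i h) ↑b else 0 := by
  have hc := hS.2 ↑i ↑b (by rw [i.2, b.2]; decide)
  rw [Matrix.sub_apply, Matrix.mul_apply, Matrix.mul_apply, sub_eq_zero] at hc
  rw [sum_split β] at hc
  rw [sum_split β (fun l => M' ↑i l * S l ↑b)] at hc
  have e1 : ∑ l : {l // β l = 0}, S ↑i ↑l * M ↑l ↑b = S ↑i ↑(φ b) :=
    sum_norm_col β φ hNM b (fun l => S ↑i ↑l)
  have e2 : ∑ l : {l // β l = 1}, S ↑i ↑l * M ↑l ↑b = 0 :=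
    Finset.sum_eq_zero fun l _ => by rw [S_low_block β hS i l, zero_mul]
  have e3 : ∑ l : {l // β l = 0}, M' ↑i ↑l * S ↑l ↑b = 0 :=
    Finset.sum_eq_zero fun l _ => by rw [S_low_block β hS l b, mul_zero]
  have e4 : ∑ l : {l // β l = 1}, M' ↑i ↑l * S ↑l ↑b
      = if h : ∃ c, φ c = i then S ↑(psi β φ i h) ↑b else 0 :=
    sum_norm_right β φ hNM' i (fun l => S ↑l ↑b)
  rw [e1, e2, e3, e4, add_zero, zero_add] at hc
  exact hc

end Norm

end Red

section Red2
variable {ι : Type} [Fintype ι] [DecidableEq ι] (β : ι → Fin 2)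
  (φ : {i // β i = 1} ↪ {i // β i = 0})

theorem bred_eq_one_iff (i : {i // β i = 0}) : bred β φ i = 1 ↔ ∃ b, φ b = i := by
  constructor
  · intro h
    by_contra hn
    rw [bred_zero β φ hn] at h
    exact absurd h (by decide)
  · exact bred_one β φ

theorem bred_eq_zero_iff (i : {i // β i = 0}) : bred β φ i = 0 ↔ ¬ ∃ b, φ b = i := by
  constructor
  · intro h hn
    rw [bred_one β φ hn] at h
    exact absurd h (by decide)
  · exact bred_zero β φ

theorem Mred_adm (M : Matrix ι ι k) :
    ∀ i j, ¬ bred β φ i ≤ bred β φ j → Mred β φ M i j = 0 := by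
  intro i j hij
  rw [fin2_not_le] at hij
  have hi : ∃ b, φ b = i := (bred_eq_one_iff β φ i).mp hij.1
  have hj : ¬ ∃ b, φ b = j := (bred_eq_zero_iff β φ j).mp hij.2
  simp only [Mred, Matrix.of_apply]
  rw [dif_pos hi, dif_neg hj]

theorem Mred_trace (M : Matrix ι ι k) : (Mred β φ M).trace = M.trace := by
  simp only [Matrix.trace, Matrix.diag]
  rw [sum_ran_split β φ (fun i => Mred β φ M i i), sum_split β (fun i => M i i)]
  have h1 : ∑ i : {x : {i // β i = 0} // ¬ ∃ b, φ b = x}, Mred β φ M ↑i ↑i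
      = ∑ i : {x : {i // β i = 0} // ¬ ∃ b, φ b = x}, M ↑↑i ↑↑i := by
    apply Finset.sum_congr rfl
    intro l _
    simp only [Mred, Matrix.of_apply]
    rw [dif_neg l.2]
  have h2 : ∑ b : {i // β i = 1}, Mred β φ M (φ b) (φ b)
      = ∑ b : {i // β i = 1}, (M ↑(φ b) ↑(φ b) + M ↑b ↑b) := by
    apply Finset.sum_congr rfl
    intro b _
    simp only [Mred, Matrix.of_apply]
    rw [dif_pos ⟨b, rfl⟩]
    rw [dif_pos (⟨b, rfl⟩ : ∃ c, φ c = φ b)]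
    rw [psi_phi β φ b]
  rw [h1, h2, Finset.sum_add_distrib]
  rw [sum_ran_split β φ (fun i => M ↑i ↑i)]
  ring

section Corr
variable {M M' S : Matrix ι ι k}
  (hNM : Norm β φ M) (hNM' : Norm β φ M')
  (hMadm : ∀ i j, ¬ β i ≤ β j → M i j = 0)
  (hM'adm : ∀ i j, ¬ β i ≤ β j → M' i j = 0)
  (hS : Hm β M M' S)

include hNM hNM' hMadm hM'adm hS

theorem Cb0 (i : {i // β i = 0}) (hi : ¬ ∃ c, φ c = i) (b : {i // β i = 1}) :
    S ↑i ↑(φ b) = 0 := by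
  rw [Cb β φ hNM hNM' hS i b, dif_neg hi]

theorem Cb0' (i : {i // β i = 0}) (hi : ¬ ∃ c, φ c = i) (l : {i // β i = 0})
    (hl : ∃ b, φ b = l) : S ↑i ↑l = 0 := by
  obtain ⟨b, hb⟩ := hl
  rw [← hb]
  exact Cb0 β φ hNM hNM' hMadm hM'adm hS i hi b

theorem Cb1 (a b : {i // β i = 1}) : S ↑(φ a) ↑(φ b) = S ↑a ↑b := by
  rw [Cb β φ hNM hNM' hS (φ a) b, dif_pos (⟨a, rfl⟩ : ∃ c, φ c = φ a),
    psi_phi β φ a]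

/-- forward transfer of morphisms to the reduced problem -/
theorem Hm_red : Hm (bred β φ) (Mred β φ M) (Mred β φ M') (Sres β S) := by
  constructor
  · intro i j hij
    rw [fin2_lt_iff] at hij
    have hi : ¬ ∃ b, φ b = i := (bred_eq_zero_iff β φ i).mp hij.1
    have hj : ∃ b, φ b = j := (bred_eq_one_iff β φ j).mp hij.2
    obtain ⟨b, hb⟩ := hj
    show S ↑i ↑j = 0
    rw [← hb]
    exact Cb0 β φ hNM hNM' hMadm hM'adm hS i hi b
  · intro i j hij
    rw [Matrix.sub_apply, Matrix.mul_apply, Matrix.mul_apply, sub_eq_zero]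
    by_cases hi : ∃ a, φ a = i
    · -- i in range: then j in range as well
      have hbi : bred β φ i = 1 := bred_one β φ hi
      have hbj : ∃ b, φ b = j :=
        (bred_eq_one_iff β φ j).mp (fin2_one_le _ _ hbi hij)
      obtain ⟨a, ha⟩ := hi
      obtain ⟨b, hb⟩ := hbj
      subst ha hb
      -- the two big equations
      have big1 := hS.2 ↑a ↑b (by rw [a.2, b.2])
      have big2 := hS.2 ↑(φ a) ↑(φ b) (by rw [(φ a).2, (φ b).2])
      rw [Matrix.sub_apply, Matrix.mul_apply, Matrix.mul_apply, sub_eq_zero,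
        sum_split β (fun l => S ↑a l * M l ↑b),
        sum_split β (fun l => M' ↑a l * S l ↑b)] at big1
      rw [Matrix.sub_apply, Matrix.mul_apply, Matrix.mul_apply, sub_eq_zero,
        sum_split β (fun l => S ↑(φ a) l * M l ↑(φ b)),
        sum_split β (fun l => M' ↑(φ a) l * S l ↑(φ b))] at big2
      -- analyze big1
      have b1a : ∑ l : {l // β l = 0}, S ↑a ↑l * M ↑l ↑b = S ↑a ↑(φ b) :=
        sum_norm_col β φ hNM b (fun l => S ↑a ↑l)
      have b1b : ∑ l : {l // β l = 0}, M' ↑a ↑l * S ↑l ↑b = 0 :=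
        Finset.sum_eq_zero fun l _ => by
          rw [hM'adm ↑a ↑l (by rw [a.2, l.2]; decide), zero_mul]
      rw [b1a, b1b, zero_add] at big1
      -- big1 : S ↑a ↑(φ b) + ∑ c, S ↑a ↑c * M ↑c ↑b = ∑ c, M' ↑a ↑c * S ↑c ↑b
      -- analyze big2
      have b2a : ∑ l : {l // β l = 1}, S ↑(φ a) ↑l * M ↑l ↑(φ b) = 0 :=
        Finset.sum_eq_zero fun l _ => by
          rw [hMadm ↑l ↑(φ b) (by rw [l.2, (φ b).2]; decide), mul_zero]
      have b2b : ∑ l : {l // β l = 1}, M' ↑(φ a) ↑l * S ↑l ↑(φ b)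
          = S ↑a ↑(φ b) := by
        rw [sum_norm_right β φ hNM' (φ a) (fun c => S ↑c ↑(φ b)),
          dif_pos (⟨a, rfl⟩ : ∃ c, φ c = φ a), psi_phi β φ a]
      rw [b2a, b2b, add_zero] at big2
      -- split the two full sums in big2 along the range of φ
      rw [sum_ran_split β φ (fun l => S ↑(φ a) ↑l * M ↑l ↑(φ b)),
        sum_ran_split β φ (fun l => M' ↑(φ a) ↑l * S ↑l ↑(φ b))] at big2
      have b2c : ∑ l : {x : {i // β i = 0} // ¬ ∃ b, φ b = x},
          M' ↑(φ a) ↑↑l * S ↑↑l ↑(φ b) = 0 :=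
        Finset.sum_eq_zero fun l _ => by
          rw [Cb0 β φ hNM hNM' hMadm hM'adm hS ↑l l.2 b, mul_zero]
      have b2d : ∑ c : {i // β i = 1}, S ↑(φ a) ↑(φ c) * M ↑(φ c) ↑(φ b)
          = ∑ c : {i // β i = 1}, S ↑a ↑c * M ↑(φ c) ↑(φ b) :=
        Finset.sum_congr rfl fun c _ => by rw [Cb1 β φ hNM hNM' hMadm hM'adm hS a c]
      have b2e : ∑ c : {i // β i = 1}, M' ↑(φ a) ↑(φ c) * S ↑(φ c) ↑(φ b)
          = ∑ c : {i // β i = 1}, M' ↑(φ a) ↑(φ c) * S ↑c ↑b :=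
        Finset.sum_congr rfl fun c _ => by rw [Cb1 β φ hNM hNM' hMadm hM'adm hS c b]
      rw [b2c, b2d, b2e, zero_add] at big2
      -- now rewrite the goal
      rw [sum_ran_split β φ (fun l => Sres β S (φ a) l * Mred β φ M l (φ b)),
        sum_ran_split β φ (fun l => Mred β φ M' (φ a) l * Sres β S l (φ b))]
      have gL1 : ∑ l : {x : {i // β i = 0} // ¬ ∃ b, φ b = x},
          Sres β S (φ a) ↑l * Mred β φ M ↑l (φ b)
          = ∑ l : {x : {i // β i = 0} // ¬ ∃ b, φ b = x},
              S ↑(φ a) ↑↑l * M ↑↑l ↑(φ b) :=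
        Finset.sum_congr rfl fun l _ => by
          show S ↑(φ a) ↑↑l * Mred β φ M ↑l (φ b) = _
          simp only [Mred, Matrix.of_apply]
          rw [dif_neg l.2]
      have gL2 : ∑ c : {i // β i = 1}, Sres β S (φ a) (φ c) * Mred β φ M (φ c) (φ b)
          = (∑ c : {i // β i = 1}, S ↑a ↑c * M ↑(φ c) ↑(φ b))
            + ∑ c : {i // β i = 1}, S ↑a ↑c * M ↑c ↑b := by
        rw [← Finset.sum_add_distrib]
        refine Finset.sum_congr rfl fun c _ => ?_
        show S ↑(φ a) ↑(φ c) * Mred β φ M (φ c) (φ b) = _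
        simp only [Mred, Matrix.of_apply]
        rw [dif_pos (⟨c, rfl⟩ : ∃ d, φ d = φ c)]
        rw [dif_pos (⟨b, rfl⟩ : ∃ d, φ d = φ b)]
        rw [psi_phi β φ c, psi_phi β φ b, Cb1 β φ hNM hNM' hMadm hM'adm hS a c]
        ring
      have gR1 : ∑ l : {x : {i // β i = 0} // ¬ ∃ b, φ b = x},
          Mred β φ M' (φ a) ↑l * Sres β S ↑l (φ b) = 0 :=
        Finset.sum_eq_zero fun l _ => by
          have : Mred β φ M' (φ a) ↑l = 0 := by
            simp only [Mred, Matrix.of_apply]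
            rw [dif_pos (⟨a, rfl⟩ : ∃ d, φ d = φ a), dif_neg l.2]
          rw [this, zero_mul]
      have gR2 : ∑ c : {i // β i = 1}, Mred β φ M' (φ a) (φ c) * Sres β S (φ c) (φ b)
          = (∑ c : {i // β i = 1}, M' ↑(φ a) ↑(φ c) * S ↑c ↑b)
            + ∑ c : {i // β i = 1}, M' ↑a ↑c * S ↑c ↑b := by
        rw [← Finset.sum_add_distrib]
        refine Finset.sum_congr rfl fun c _ => ?_
        show Mred β φ M' (φ a) (φ c) * S ↑(φ c) ↑(φ b) = _
        simp only [Mred, Matrix.of_apply]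
        rw [dif_pos (⟨a, rfl⟩ : ∃ d, φ d = φ a)]
        rw [dif_pos (⟨c, rfl⟩ : ∃ d, φ d = φ c)]
        rw [psi_phi β φ a, psi_phi β φ c, Cb1 β φ hNM hNM' hMadm hM'adm hS c b]
        ring
      rw [gL1, gL2, gR1, gR2, zero_add]
      linear_combination big1 + big2
    · -- i not in range
      have big := hS.2 ↑i ↑j (by rw [i.2, j.2])
      rw [Matrix.sub_apply, Matrix.mul_apply, Matrix.mul_apply, sub_eq_zero,
        sum_split β (fun l => S ↑i l * M l ↑j),
        sum_split β (fun l => M' ↑i l * S l ↑j)] at big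
      have ba : ∑ l : {l // β l = 1}, S ↑i ↑l * M ↑l ↑j = 0 :=
        Finset.sum_eq_zero fun l _ => by
          rw [hMadm ↑l ↑j (by rw [l.2, j.2]; decide), mul_zero]
      have bb : ∑ l : {l // β l = 1}, M' ↑i ↑l * S ↑l ↑j = 0 := by
        rw [sum_norm_right β φ hNM' i (fun c => S ↑c ↑j), dif_neg hi]
      rw [ba, bb, add_zero, add_zero] at big
      -- big : ∑ l : {β = 0}, S ↑i ↑l * M ↑l ↑j = ∑ l : {β = 0}, M' ↑i ↑l * S ↑l ↑j
      have gL : ∑ l, Sres β S i l * Mred β φ M l j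
          = ∑ l : {l // β l = 0}, S ↑i ↑l * M ↑l ↑j :=
        Finset.sum_congr rfl fun l _ => by
          by_cases hl : ∃ b, φ b = l
          · rw [show Sres β S i l = S ↑i ↑l from rfl,
              Cb0' β φ hNM hNM' hMadm hM'adm hS i hi l hl, zero_mul, zero_mul]
          · show S ↑i ↑l * Mred β φ M l j = _
            simp only [Mred, Matrix.of_apply]
            rw [dif_neg hl]
      have gR : ∑ l, Mred β φ M' i l * Sres β S l j
          = ∑ l : {l // β l = 0}, M' ↑i ↑l * S ↑l ↑j :=
        Finset.sum_congr rfl fun l _ => by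
          show Mred β φ M' i l * S ↑l ↑j = _
          simp only [Mred, Matrix.of_apply]
          rw [dif_neg hi]
      rw [gL, gR]
      exact big

end Corr
end Red2

section Lift
variable {ι : Type} [Fintype ι] [DecidableEq ι] (β : ι → Fin 2)
  (φ : {i // β i = 1} ↪ {i // β i = 0})
  {M : Matrix ι ι k} (T' : Matrix {i // β i = 0} {i // β i = 0} k)

/-- lift of a reduced endomorphism -/
noncomputable def Lift : Matrix ι ι k :=
  Matrix.of fun i j =>
    if h00 : β i = 0 ∧ β j = 0 then T' ⟨i, h00.1⟩ ⟨j, h00.2⟩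
    else if h11 : β i = 1 ∧ β j = 1 then T' (φ ⟨i, h11.1⟩) (φ ⟨j, h11.2⟩)
    else if h10 : β i = 1 ∧ β j = 0 then
      ∑ l : {i // β i = 0},
        (T' (φ ⟨i, h10.1⟩) l * M ↑l j - M ↑(φ ⟨i, h10.1⟩) ↑l * T' l ⟨j, h10.2⟩)
    else 0

theorem Lift_00 {i j : ι} (h0i : β i = 0) (h0j : β j = 0) :
    Lift β φ (M := M) T' i j = T' ⟨i, h0i⟩ ⟨j, h0j⟩ := by
  simp only [Lift, Matrix.of_apply]
  rw [dif_pos ⟨h0i, h0j⟩]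

theorem Lift_01 {i j : ι} (h0i : β i = 0) (h1j : β j = 1) :
    Lift β φ (M := M) T' i j = 0 := by
  simp only [Lift, Matrix.of_apply]
  rw [dif_neg (by rw [h1j]; rintro ⟨_, h⟩; exact absurd h (by decide)),
    dif_neg (by rw [h0i]; rintro ⟨h, _⟩; exact absurd h (by decide)),
    dif_neg (by rw [h0i]; rintro ⟨h, _⟩; exact absurd h (by decide))]

theorem Lift_11 {i j : ι} (h1i : β i = 1) (h1j : β j = 1) :
    Lift β φ (M := M) T' i j = T' (φ ⟨i, h1i⟩) (φ ⟨j, h1j⟩) := by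
  simp only [Lift, Matrix.of_apply]
  rw [dif_neg (by rw [h1i]; rintro ⟨h, _⟩; exact absurd h (by decide))]
  rw [dif_pos ⟨h1i, h1j⟩]

theorem Lift_10 {i j : ι} (h1i : β i = 1) (h0j : β j = 0) :
    Lift β φ (M := M) T' i j = ∑ l : {i // β i = 0},
        (T' (φ ⟨i, h1i⟩) l * M ↑l j - M ↑(φ ⟨i, h1i⟩) ↑l * T' l ⟨j, h0j⟩) := by
  simp only [Lift, Matrix.of_apply]
  rw [dif_neg (by rw [h1i]; rintro ⟨h, _⟩; exact absurd h (by decide)),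
    dif_neg (by rw [h0j]; rintro ⟨_, h⟩; exact absurd h (by decide)),
    dif_pos ⟨h1i, h0j⟩]

variable (hNM : Norm β φ M) (hMadm : ∀ i j, ¬ β i ≤ β j → M i j = 0)
  (hT' : Hm (bred β φ) (Mred β φ M) (Mred β φ M) T')

include hNM hMadm hT'

theorem Lift_Hm : Hm β M M (Lift β φ (M := M) T') := by
  have hbz : ∀ i : ι, ¬ β i = 0 → β i = 1 := fun i h => (fin2_ne_zero (β i)).mp h
  constructor
  · intro i j hij
    rw [fin2_lt_iff] at hij
    exact Lift_01 β φ T' hij.1 hij.2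
  · intro i j hij
    rw [Matrix.sub_apply, Matrix.mul_apply, Matrix.mul_apply, sub_eq_zero]
    by_cases h0i : β i = 0
    · by_cases h0j : β j = 0
      · -- case (0,0)
        have eL : ∑ l, Lift β φ (M := M) T' i l * M l j
            = ∑ l : {l // β l = 0}, T' ⟨i, h0i⟩ l * M ↑l j := by
          rw [sum_split β (fun l => Lift β φ (M := M) T' i l * M l j)]
          have z1 : ∑ l : {l // β l = 1}, Lift β φ (M := M) T' i ↑l * M ↑l j = 0 :=
            Finset.sum_eq_zero fun l _ => by rw [Lift_01 β φ T' h0i l.2, zero_mul]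
          rw [z1, add_zero]
          exact Finset.sum_congr rfl fun l _ => by rw [Lift_00 β φ T' h0i l.2]
        have eR : ∑ l, M i l * Lift β φ (M := M) T' l j
            = (∑ l : {l // β l = 0}, M i ↑l * T' l ⟨j, h0j⟩)
              + if h : ∃ b, φ b = (⟨i, h0i⟩ : {i // β i = 0}) then
                  (∑ l : {l // β l = 0},
                    (T' (φ (psi β φ ⟨i, h0i⟩ h)) l * M ↑l j
                      - M ↑(φ (psi β φ ⟨i, h0i⟩ h)) ↑l * T' l ⟨j, h0j⟩)) else 0 := by
          rw [sum_split β (fun l => M i l * Lift β φ (M := M) T' l j)]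
          congr 1
          · exact Finset.sum_congr rfl fun l _ => by rw [Lift_00 β φ T' l.2 h0j]
          · rw [← sum_norm_right β φ hNM ⟨i, h0i⟩
              (fun l => ∑ m : {i // β i = 0},
                (T' (φ l) m * M ↑m j - M ↑(φ l) ↑m * T' m ⟨j, h0j⟩))]
            exact Finset.sum_congr rfl fun l _ => by
              rw [Lift_10 β φ T' l.2 h0j]
        rw [eL, eR]
        by_cases hran : ∃ b, φ b = (⟨i, h0i⟩ : {i // β i = 0})
        · rw [dif_pos hran]
          have : (↑(φ (psi β φ ⟨i, h0i⟩ hran)) : ι) = i := by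
            rw [phi_psi β φ _ hran]
          rw [show φ (psi β φ ⟨i, h0i⟩ hran) = ⟨i, h0i⟩ from phi_psi β φ _ hran]
          rw [Finset.sum_sub_distrib]
          show _ = _ + (∑ l : {l // β l = 0}, T' ⟨i, h0i⟩ l * M ↑l j
            - ∑ l : {l // β l = 0}, M ↑(⟨i, h0i⟩ : {i // β i = 0}) ↑l * T' l ⟨j, h0j⟩)
          ring_nf
        · rw [dif_neg hran, add_zero]
          -- use the reduced morphism condition at (⟨i⟩,⟨j⟩)
          have hred := hT'.2 ⟨i, h0i⟩ ⟨j, h0j⟩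
            (by rw [bred_zero β φ hran]; exact Fin.zero_le _)
          rw [Matrix.sub_apply, Matrix.mul_apply, Matrix.mul_apply, sub_eq_zero] at hred
          have eL2 : ∑ l, T' ⟨i, h0i⟩ l * Mred β φ M l ⟨j, h0j⟩
              = ∑ l : {l // β l = 0}, T' ⟨i, h0i⟩ l * M ↑l j :=
            Finset.sum_congr rfl fun l _ => by
              by_cases hl : ∃ b, φ b = l
              · have : T' ⟨i, h0i⟩ l = 0 := by
                  apply hT'.1
                  rw [bred_zero β φ hran, bred_one β φ hl]
                  decide
                rw [this, zero_mul, zero_mul]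
              · simp only [Mred, Matrix.of_apply]
                rw [dif_neg hl]
          have eR2 : ∑ l, Mred β φ M ⟨i, h0i⟩ l * T' l ⟨j, h0j⟩
              = ∑ l : {l // β l = 0}, M i ↑l * T' l ⟨j, h0j⟩ :=
            Finset.sum_congr rfl fun l _ => by
              simp only [Mred, Matrix.of_apply]
              rw [dif_neg hran]
          rw [eL2, eR2] at hred
          exact hred
      · -- case (0,1)
        have h1j : β j = 1 := hbz j h0j
        have eL : ∑ l, Lift β φ (M := M) T' i l * M l j
            = T' ⟨i, h0i⟩ (φ ⟨j, h1j⟩) := by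
          rw [sum_split β (fun l => Lift β φ (M := M) T' i l * M l j)]
          have z1 : ∑ l : {l // β l = 1}, Lift β φ (M := M) T' i ↑l * M ↑l j = 0 :=
            Finset.sum_eq_zero fun l _ => by rw [Lift_01 β φ T' h0i l.2, zero_mul]
          have z0 : ∑ l : {l // β l = 0}, Lift β φ (M := M) T' i ↑l * M ↑l j
              = T' ⟨i, h0i⟩ (φ ⟨j, h1j⟩) := by
            have := sum_norm_col β φ hNM ⟨j, h1j⟩
              (fun l => Lift β φ (M := M) T' i ↑l)
            rw [this, Lift_00 β φ T' h0i (φ ⟨j, h1j⟩).2]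
          rw [z1, z0, add_zero]
        have eR : ∑ l, M i l * Lift β φ (M := M) T' l j
            = if h : ∃ b, φ b = (⟨i, h0i⟩ : {i // β i = 0}) then
                T' (φ (psi β φ ⟨i, h0i⟩ h)) (φ ⟨j, h1j⟩) else 0 := by
          rw [sum_split β (fun l => M i l * Lift β φ (M := M) T' l j)]
          have z0 : ∑ l : {l // β l = 0}, M i ↑l * Lift β φ (M := M) T' ↑l j = 0 :=
            Finset.sum_eq_zero fun l _ => by rw [Lift_01 β φ T' l.2 h1j, mul_zero]
          rw [z0, zero_add]
          rw [← sum_norm_right β φ hNM ⟨i, h0i⟩ (fun l => T' (φ l) (φ ⟨j, h1j⟩))]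
          exact Finset.sum_congr rfl fun l _ => by rw [Lift_11 β φ T' l.2 h1j]
        rw [eL, eR]
        by_cases hran : ∃ b, φ b = (⟨i, h0i⟩ : {i // β i = 0})
        · rw [dif_pos hran, phi_psi β φ _ hran]
        · rw [dif_neg hran]
          apply hT'.1
          rw [bred_zero β φ hran, bred_one β φ ⟨⟨j, h1j⟩, rfl⟩]
          decide
    · have h1i : β i = 1 := hbz i h0i
      by_cases h0j : β j = 0
      · -- case (1,0): no condition needed
        exact absurd hij (by rw [h1i, h0j]; decide)
      · -- case (1,1)
        have h1j : β j = 1 := hbz j h0j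
        have eL : ∑ l, Lift β φ (M := M) T' i l * M l j
            = (∑ m : {i // β i = 0},
                (T' (φ ⟨i, h1i⟩) m * M ↑m ↑(φ ⟨j, h1j⟩)
                  - M ↑(φ ⟨i, h1i⟩) ↑m * T' m (φ ⟨j, h1j⟩)))
              + ∑ c : {l // β l = 1}, T' (φ ⟨i, h1i⟩) (φ c) * M ↑c j := by
          rw [sum_split β (fun l => Lift β φ (M := M) T' i l * M l j)]
          congr 1
          · have := sum_norm_col β φ hNM ⟨j, h1j⟩
              (fun l => Lift β φ (M := M) T' i ↑l)
            rw [this, Lift_10 β φ T' h1i (φ ⟨j, h1j⟩).2]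
          · exact Finset.sum_congr rfl fun c _ => by rw [Lift_11 β φ T' h1i c.2]
        have eR : ∑ l, M i l * Lift β φ (M := M) T' l j
            = ∑ c : {l // β l = 1}, M i ↑c * T' (φ c) (φ ⟨j, h1j⟩) := by
          rw [sum_split β (fun l => M i l * Lift β φ (M := M) T' l j)]
          have z0 : ∑ l : {l // β l = 0}, M i ↑l * Lift β φ (M := M) T' ↑l j = 0 :=
            Finset.sum_eq_zero fun l _ => by
              rw [hMadm i ↑l (by rw [h1i, l.2]; decide), zero_mul]
          rw [z0, zero_add]
          exact Finset.sum_congr rfl fun c _ => by rw [Lift_11 β φ T' c.2 h1j]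
        rw [eL, eR]
        -- use the reduced condition at (φ⟨i⟩, φ⟨j⟩)
        have hred := hT'.2 (φ ⟨i, h1i⟩) (φ ⟨j, h1j⟩)
          (by rw [bred_one β φ ⟨⟨i, h1i⟩, rfl⟩, bred_one β φ ⟨⟨j, h1j⟩, rfl⟩])
        rw [Matrix.sub_apply, Matrix.mul_apply, Matrix.mul_apply, sub_eq_zero] at hred
        rw [sum_ran_split β φ (fun m => T' (φ ⟨i, h1i⟩) m * Mred β φ M m (φ ⟨j, h1j⟩)),
          sum_ran_split β φ (fun m => Mred β φ M (φ ⟨i, h1i⟩) m * T' m (φ ⟨j, h1j⟩))] at hred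
        have r1 : ∑ m : {x : {i // β i = 0} // ¬ ∃ b, φ b = x},
            T' (φ ⟨i, h1i⟩) ↑m * Mred β φ M ↑m (φ ⟨j, h1j⟩)
            = ∑ m : {x : {i // β i = 0} // ¬ ∃ b, φ b = x},
                T' (φ ⟨i, h1i⟩) ↑m * M ↑↑m ↑(φ ⟨j, h1j⟩) :=
          Finset.sum_congr rfl fun m _ => by
            simp only [Mred, Matrix.of_apply]
            rw [dif_neg m.2]
        have r2 : ∑ c : {l // β l = 1},
            T' (φ ⟨i, h1i⟩) (φ c) * Mred β φ M (φ c) (φ ⟨j, h1j⟩)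
            = ∑ c : {l // β l = 1}, T' (φ ⟨i, h1i⟩) (φ c)
                * (M ↑(φ c) ↑(φ ⟨j, h1j⟩) + M ↑c j) :=
          Finset.sum_congr rfl fun c _ => by
            simp only [Mred, Matrix.of_apply]
            rw [dif_pos (⟨c, rfl⟩ : ∃ d, φ d = φ c),
              dif_pos (⟨⟨j, h1j⟩, rfl⟩ : ∃ d, φ d = φ ⟨j, h1j⟩),
              psi_phi β φ c, psi_phi β φ ⟨j, h1j⟩]
        have r3 : ∑ m : {x : {i // β i = 0} // ¬ ∃ b, φ b = x},
            Mred β φ M (φ ⟨i, h1i⟩) ↑m * T' ↑m (φ ⟨j, h1j⟩) = 0 :=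
          Finset.sum_eq_zero fun m _ => by
            have : Mred β φ M (φ ⟨i, h1i⟩) ↑m = 0 := by
              simp only [Mred, Matrix.of_apply]
              rw [dif_pos (⟨⟨i, h1i⟩, rfl⟩ : ∃ d, φ d = φ ⟨i, h1i⟩), dif_neg m.2]
            rw [this, zero_mul]
        have r4 : ∑ c : {l // β l = 1},
            Mred β φ M (φ ⟨i, h1i⟩) (φ c) * T' (φ c) (φ ⟨j, h1j⟩)
            = ∑ c : {l // β l = 1},
                (M ↑(φ ⟨i, h1i⟩) ↑(φ c) + M i ↑c) * T' (φ c) (φ ⟨j, h1j⟩) :=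
          Finset.sum_congr rfl fun c _ => by
            simp only [Mred, Matrix.of_apply]
            rw [dif_pos (⟨⟨i, h1i⟩, rfl⟩ : ∃ d, φ d = φ ⟨i, h1i⟩),
              dif_pos (⟨c, rfl⟩ : ∃ d, φ d = φ c),
              psi_phi β φ ⟨i, h1i⟩, psi_phi β φ c]
        rw [r1, r2, r3, r4, zero_add] at hred
        -- expand and finish with linear algebra over sums
        have expand1 : ∑ c : {l // β l = 1}, T' (φ ⟨i, h1i⟩) (φ c)
            * (M ↑(φ c) ↑(φ ⟨j, h1j⟩) + M ↑c j)
            = (∑ c : {l // β l = 1}, T' (φ ⟨i, h1i⟩) (φ c) * M ↑(φ c) ↑(φ ⟨j, h1j⟩))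
              + ∑ c : {l // β l = 1}, T' (φ ⟨i, h1i⟩) (φ c) * M ↑c j := by
          rw [← Finset.sum_add_distrib]
          exact Finset.sum_congr rfl fun c _ => by ring
        have expand2 : ∑ c : {l // β l = 1},
            (M ↑(φ ⟨i, h1i⟩) ↑(φ c) + M i ↑c) * T' (φ c) (φ ⟨j, h1j⟩)
            = (∑ c : {l // β l = 1}, M ↑(φ ⟨i, h1i⟩) ↑(φ c) * T' (φ c) (φ ⟨j, h1j⟩))
              + ∑ c : {l // β l = 1}, M i ↑c * T' (φ c) (φ ⟨j, h1j⟩) := by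
          rw [← Finset.sum_add_distrib]
          exact Finset.sum_congr rfl fun c _ => by ring
        rw [expand1, expand2] at hred
        have split1 : ∑ m : {i // β i = 0},
            (T' (φ ⟨i, h1i⟩) m * M ↑m ↑(φ ⟨j, h1j⟩)
              - M ↑(φ ⟨i, h1i⟩) ↑m * T' m (φ ⟨j, h1j⟩))
            = ((∑ m : {x : {i // β i = 0} // ¬ ∃ b, φ b = x},
                T' (φ ⟨i, h1i⟩) ↑m * M ↑↑m ↑(φ ⟨j, h1j⟩))
              + ∑ c : {l // β l = 1}, T' (φ ⟨i, h1i⟩) (φ c) * M ↑(φ c) ↑(φ ⟨j, h1j⟩))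
              - ((0 : k)
              + ∑ c : {l // β l = 1}, M ↑(φ ⟨i, h1i⟩) ↑(φ c) * T' (φ c) (φ ⟨j, h1j⟩)) := by
          rw [Finset.sum_sub_distrib,
            sum_ran_split β φ (fun m => T' (φ ⟨i, h1i⟩) m * M ↑m ↑(φ ⟨j, h1j⟩)),
            sum_ran_split β φ (fun m => M ↑(φ ⟨i, h1i⟩) ↑m * T' m (φ ⟨j, h1j⟩))]
          have hB1 : ∑ m : {x : {i // β i = 0} // ¬ ∃ b, φ b = x},
              M ↑(φ ⟨i, h1i⟩) ↑↑m * T' ↑m (φ ⟨j, h1j⟩) = 0 :=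
            Finset.sum_eq_zero fun m _ => by
              have : T' ↑m (φ ⟨j, h1j⟩) = 0 := by
                apply hT'.1
                rw [bred_zero β φ m.2, bred_one β φ ⟨⟨j, h1j⟩, rfl⟩]
                decide
              rw [this, mul_zero]
          rw [hB1]
        rw [split1]
        linear_combination hred

end Lift

section Brred
variable {ι : Type} [Fintype ι] [DecidableEq ι] (β : ι → Fin 2)
  (φ : {i // β i = 1} ↪ {i // β i = 0})

theorem Br_red {M : Matrix ι ι k} (hM : Br β M) (hNM : Norm β φ M) :
    Br (bred β φ) (Mred β φ M) := by
  refine ⟨Mred_adm β φ M, ?_⟩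
  intro T' hT'
  obtain ⟨c, hc⟩ := hM.2 _ (Lift_Hm β φ T' hNM hM.1 hT')
  refine ⟨c, ?_⟩
  funext i j
  have h := congrFun (congrFun hc ↑i) ↑j
  rw [Lift_00 β φ T' i.2 j.2] at h
  rw [Matrix.smul_apply, Matrix.one_apply] at h ⊢
  by_cases hij : i = j
  · subst hij
    simpa using h
  · rw [if_neg hij]
    rw [if_neg (fun hc' => hij (Subtype.ext hc'))] at h
    simpa using h

theorem S_of_Sres_zero {M M' S : Matrix ι ι k}
    (hNM : Norm β φ M) (hNM' : Norm β φ M')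
    (hMadm : ∀ i j, ¬ β i ≤ β j → M i j = 0)
    (hM'adm : ∀ i j, ¬ β i ≤ β j → M' i j = 0)
    (hS : Hm β M M' S) (h0 : Sres β S = 0) : S = 0 := by
  have hbz : ∀ i : ι, ¬ β i = 0 → β i = 1 := fun i h => (fin2_ne_zero (β i)).mp h
  have hrz : ∀ (a b : {x // β x = 0}), S ↑a ↑b = 0 := fun a b => by
    have := congrFun (congrFun h0 a) b
    exact this
  funext i j
  show S i j = 0
  by_cases h0i : β i = 0
  · by_cases h0j : β j = 0
    · exact hrz ⟨i, h0i⟩ ⟨j, h0j⟩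
    · exact hS.1 i j (by rw [h0i, hbz j h0j]; decide)
  · have h1i : β i = 1 := hbz i h0i
    by_cases h0j : β j = 0
    · -- the (1,0) block
      have hcond := hS.2 ↑(φ ⟨i, h1i⟩) j (by rw [(φ ⟨i, h1i⟩).2, h0j])
      rw [Matrix.sub_apply, Matrix.mul_apply, Matrix.mul_apply, sub_eq_zero,
        sum_split β (fun l => S ↑(φ ⟨i, h1i⟩) l * M l j),
        sum_split β (fun l => M' ↑(φ ⟨i, h1i⟩) l * S l j)] at hcond
      have p1 : ∑ l : {l // β l = 0}, S ↑(φ ⟨i, h1i⟩) ↑l * M ↑l j = 0 :=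
        Finset.sum_eq_zero fun l _ => by rw [hrz (φ ⟨i, h1i⟩) l, zero_mul]
      have p2 : ∑ l : {l // β l = 1}, S ↑(φ ⟨i, h1i⟩) ↑l * M ↑l j = 0 :=
        Finset.sum_eq_zero fun l _ => by
          rw [hS.1 ↑(φ ⟨i, h1i⟩) ↑l (by rw [(φ ⟨i, h1i⟩).2, l.2]; decide), zero_mul]
      have p3 : ∑ l : {l // β l = 0}, M' ↑(φ ⟨i, h1i⟩) ↑l * S ↑l j = 0 :=
        Finset.sum_eq_zero fun l _ => by rw [hrz l ⟨j, h0j⟩, mul_zero]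
      have p4 : ∑ l : {l // β l = 1}, M' ↑(φ ⟨i, h1i⟩) ↑l * S ↑l j = S i j := by
        rw [sum_norm_right β φ hNM' (φ ⟨i, h1i⟩) (fun l => S ↑l j),
          dif_pos (⟨⟨i, h1i⟩, rfl⟩ : ∃ c, φ c = φ ⟨i, h1i⟩), psi_phi β φ ⟨i, h1i⟩]
      rw [p1, p2, p3, p4, add_zero, zero_add] at hcond
      exact hcond.symm
    · have h1j : β j = 1 := hbz j h0j
      have := Cb1 β φ hNM hNM' hMadm hM'adm hS ⟨i, h1i⟩ ⟨j, h1j⟩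
      rw [hrz (φ ⟨i, h1i⟩) (φ ⟨j, h1j⟩)] at this
      exact this.symm

theorem card_split : Fintype.card {i // β i = 0} + Fintype.card {i // β i = 1}
    = Fintype.card ι := by
  classical
  have e : {i // β i = 0} ⊕ {i // ¬ β i = 0} ≃ ι := Equiv.sumCompl _
  have e2 : {i // ¬ β i = 0} ≃ {i // β i = 1} :=
    Equiv.subtypeEquivRight (fun i => fin2_ne_zero (β i))
  have := Fintype.card_congr e
  rw [Fintype.card_sum, Fintype.card_congr e2] at this
  exact this

end Brred

section Master
variable {ι : Type} [Fintype ι] [DecidableEq ι]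

/-- the master reduction: the injective case, assuming the theorem in smaller size -/
theorem red_case (n : ℕ)
    (IH : ∀ (κ : Type) [Fintype κ] [DecidableEq κ], Fintype.card κ ≤ n →
      ∀ (γ : κ → Fin 2) (N N' : Matrix κ κ k), Br γ N → Br γ N' →
        N.trace ≠ N'.trace → ∀ T, Hm γ N N' T → T = 0)
    (β : ι → Fin 2)
    (hcard : Fintype.card ι ≤ n + 1) (hone : ∃ i, β i = 1)
    (M M' : Matrix ι ι k) (hM : Br β M) (hM' : Br β M')
    (htr : M.trace ≠ M'.trace) (S : Matrix ι ι k) (hS : Hm β M M' S)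
    (hinjM : Function.Injective (Bzo β M).mulVec)
    (hinjM' : Function.Injective (Bzo β M').mulVec) : S = 0 := by
  classical
  have hcle : Fintype.card {i // β i = 1} ≤ Fintype.card {i // β i = 0} :=
    card_le_of_inj (Bzo β M) hinjM
  obtain ⟨φ⟩ := Function.Embedding.nonempty_of_card_le hcle
  obtain ⟨C, Ci, hdC, hdCi, hCCi, hCiC, hnorm⟩ := exists_normalizer β hinjM φ
  obtain ⟨D, Di, hdD, hdDi, hDDi, hDiD, hnorm'⟩ := exists_normalizer β hinjM' φ
  set M1 := C * M * Ci with hM1def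
  set M1' := D * M' * Di with hM1'def
  set S1 := D * S * Ci with hS1def
  have hS1 : Hm β M1 M1' S1 := Hm_conj β hdC hdCi hdD hdDi hCiC hDiD hS
  have hM1 : Br β M1 := Br_conj β hdC hdCi hCiC hCCi hM
  have hM1' : Br β M1' := Br_conj β hdD hdDi hDiD hDDi hM'
  have hNm1 : Norm β φ M1 := hnorm
  have hNm1' : Norm β φ M1' := hnorm'
  have htr1 : M1.trace ≠ M1'.trace := by
    rw [hM1def, hM1'def, trace_conj hCiC, trace_conj hDiD]
    exact htr
  have hpos : 0 < Fintype.card {i // β i = 1} := by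
    obtain ⟨i, hi⟩ := hone
    exact Fintype.card_pos_iff.mpr ⟨⟨i, hi⟩⟩
  have hcard' : Fintype.card {i // β i = 0} ≤ n := by
    have := card_split β
    omega
  have hredz := IH {i // β i = 0} hcard' (bred β φ) (Mred β φ M1) (Mred β φ M1')
    (Br_red β φ hM1 hNm1) (Br_red β φ hM1' hNm1')
    (by rw [Mred_trace, Mred_trace]; exact htr1)
    (Sres β S1)
    (Hm_red β φ hNm1 hNm1' hM1.1 hM1'.1 hS1)
  have hS1z : S1 = 0 := S_of_Sres_zero β φ hNm1 hNm1' hM1.1 hM1'.1 hS1 hredz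
  have hrec : S = Di * S1 * C := by
    rw [hS1def,
      show Di * (D * S * Ci) * C = (Di * D) * S * (Ci * C) by noncomm_ring,
      hDiD, hCiC]
    noncomm_ring
  rw [hrec, hS1z]
  noncomm_ring

end Master

section Final
variable {ι : Type} [Fintype ι] [DecidableEq ι]

theorem Bzo_flip_eq (β : ι → Fin 2) (M : Matrix ι ι k) :
    Bzo (flip2 ∘ β) M.transpose
      = ((Bzo β M).transpose).submatrix
          ⇑(Equiv.subtypeEquivRight (fun i => flip2_eq_zero (β i)))
          ⇑(Equiv.subtypeEquivRight (fun i => flip2_eq_one (β i))) := by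
  funext i j
  simp [Bzo, Matrix.submatrix_apply, Matrix.transpose_apply, Equiv.subtypeEquivRight]
  rfl

theorem Bzo_of_flip_eq (β : ι → Fin 2) (M : Matrix ι ι k) :
    Bzo β M
      = ((Bzo (flip2 ∘ β) M.transpose).transpose).submatrix
          ⇑(Equiv.subtypeEquivRight (fun i => (flip2_eq_one (β i)).symm))
          ⇑(Equiv.subtypeEquivRight (fun i => (flip2_eq_zero (β i)).symm)) := by
  funext i j
  simp [Bzo, Matrix.submatrix_apply, Matrix.transpose_apply, Equiv.subtypeEquivRight]
  rfl

theorem card_flip0 (β : ι → Fin 2) :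
    Fintype.card {i // (flip2 ∘ β) i = 0} = Fintype.card {i // β i = 1} :=
  Fintype.card_congr (Equiv.subtypeEquivRight (fun i => flip2_eq_zero (β i)))

theorem card_flip1 (β : ι → Fin 2) :
    Fintype.card {i // (flip2 ∘ β) i = 1} = Fintype.card {i // β i = 0} :=
  Fintype.card_congr (Equiv.subtypeEquivRight (fun i => flip2_eq_one (β i)))

/-- from injectivity of the block to injectivity of the flipped block, equal sizes -/
theorem inj_flip_of_inj (β : ι → Fin 2) (M : Matrix ι ι k)
    (hcard : Fintype.card {i // β i = 0} = Fintype.card {i // β i = 1})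
    (h : Function.Injective (Bzo β M).mulVec) :
    Function.Injective (Bzo (flip2 ∘ β) M.transpose).mulVec := by
  rw [Bzo_flip_eq β M]
  exact inj_submatrix _ _ _ (inj_transpose_of_inj (Bzo β M) hcard h)

theorem inj_of_inj_flip (β : ι → Fin 2) (M : Matrix ι ι k)
    (hcard : Fintype.card {i // β i = 0} = Fintype.card {i // β i = 1})
    (h : Function.Injective (Bzo (flip2 ∘ β) M.transpose).mulVec) :
    Function.Injective (Bzo β M).mulVec := by
  rw [Bzo_of_flip_eq β M]
  refine inj_submatrix _ _ _ (inj_transpose_of_inj _ ?_ h)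
  rw [card_flip0, card_flip1]
  exact hcard.symm

/-- the main theorem, by strong induction on the size -/
theorem aux : ∀ (n : ℕ) (κ : Type) [Fintype κ] [DecidableEq κ],
    Fintype.card κ ≤ n →
    ∀ (β : κ → Fin 2) (M M' : Matrix κ κ k), Br β M → Br β M' →
      M.trace ≠ M'.trace → ∀ S, Hm β M M' S → S = 0 := by
  intro n
  induction n with
  | zero =>
    intro κ _ _ hcard β M M' hM hM' htr S hS
    haveI : IsEmpty κ := Fintype.card_eq_zero_iff.mp (Nat.le_zero.mp hcard)
    exact absurd (by simp [Matrix.trace] : M.trace = M'.trace) htr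
  | succ n IH =>
    intro κ _ _ hcard β M M' hM hM' htr S hS
    by_cases h1 : ∃ i, β i = 1
    · by_cases h0 : ∃ i, β i = 0
      · -- both blocks present
        have hS' := Hm_transpose β hS
        have htr' : M'.transpose.trace ≠ M.transpose.trace := by
          rw [Matrix.trace_transpose, Matrix.trace_transpose]
          exact htr.symm
        have h1' : ∃ i, (flip2 ∘ β) i = 1 := by
          obtain ⟨i, hi⟩ := h0
          exact ⟨i, by simp [flip2_eq_one, hi]⟩
        rcases brick_dichotomy β hM with hA | hA <;>
          rcases brick_dichotomy β hM' with hB | hB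
        · exact red_case n IH β hcard h1 M M' hM hM' htr S hS hA hB
        · -- M injective, M' flipped injective: sizes must agree
          have hc1 := card_le_of_inj _ hA
          have hc2 := card_le_of_inj _ hB
          rw [card_flip0, card_flip1] at hc2
          have hcc : Fintype.card {i // β i = 0} = Fintype.card {i // β i = 1} :=
            le_antisymm hc2 hc1
          exact red_case n IH β hcard h1 M M' hM hM' htr S hS hA
            (inj_of_inj_flip β M' hcc hB)
        · have hc1 := card_le_of_inj _ hB
          have hc2 := card_le_of_inj _ hA
          rw [card_flip0, card_flip1] at hc2
          have hcc : Fintype.card {i // β i = 0} = Fintype.card {i // β i = 1} :=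
            le_antisymm hc2 hc1
          exact red_case n IH β hcard h1 M M' hM hM' htr S hS
            (inj_of_inj_flip β M hcc hA) hB
        · -- both flipped injective: use the transposed problem
          have hz := red_case n IH (flip2 ∘ β) hcard h1' M'.transpose M.transpose
            (Br_transpose β hM') (Br_transpose β hM) htr' S.transpose hS' hB hA
          funext i j
          have := congrFun (congrFun hz j) i
          simpa using this
      · -- β is constant 1
        push_neg at h0
        refine const_case β (fun i j => ?_) hM hM' htr hS
        rw [(fin2_ne_zero (β i)).mp (h0 i), (fin2_ne_zero (β j)).mp (h0 j)]
    · -- β is constant 0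
      push_neg at h1
      refine const_case β (fun i j => ?_) hM hM' htr hS
      have hz : ∀ i : κ, β i = 0 := fun i => by
        by_contra hc
        exact h1 i ((fin2_ne_zero (β i)).mp hc)
      rw [hz i, hz j]

end Final

end CuspAux

/-- An admissible matrix for the cuspidal matrix problem: block upper triangular. -/
def CuspAdmissible {k : Type*} [Field k] {r : ℕ} (β : Fin r → Fin 2)
    (M : Matrix (Fin r) (Fin r) k) : Prop :=
  ∀ i j, ¬ β i ≤ β j → M i j = 0

/-- A morphism `S` from an admissible matrix `M` to an admissible matrix `M'`
in the cuspidal matrix problem. -/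
def CuspHom {k : Type*} [Field k] {r : ℕ} (β : Fin r → Fin 2)
    (M M' S : Matrix (Fin r) (Fin r) k) : Prop :=
  (∀ i j, β i < β j → S i j = 0) ∧
  (∀ i j, β i ≤ β j → (S * M - M' * S) i j = 0)

/-- A brick for the cuspidal matrix problem. -/
def CuspBrick {k : Type*} [Field k] {r : ℕ} (β : Fin r → Fin 2)
    (M : Matrix (Fin r) (Fin r) k) : Prop :=
  CuspAdmissible β M ∧
    ∀ S : Matrix (Fin r) (Fin r) k, CuspHom β M M S →
      ∃ c : k, S = c • (1 : Matrix (Fin r) (Fin r) k)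

/-- Between bricks for the cuspidal matrix problem with distinct traces there are
no nonzero morphisms (Proposition 11.2 of the paper). -/
theorem cuspidal_bricks_no_homs_of_trace_ne (k : Type*) [Field k] [IsAlgClosed k]
    (r : ℕ) (hr : 1 ≤ r) (β : Fin r → Fin 2)
    (M M' : Matrix (Fin r) (Fin r) k) (hM : CuspBrick β M) (hM' : CuspBrick β M')
    (htr : M.trace ≠ M'.trace)
    (S : Matrix (Fin r) (Fin r) k) (hS : CuspHom β M M' S) :
    S = 0 := by
  have hM2 : CuspAux.Br β M := ⟨hM.1, hM.2⟩
  have hM'2 : CuspAux.Br β M' := ⟨hM'.1, hM'.2⟩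
  have hS2 : CuspAux.Hm β M M' S := ⟨hS.1, hS.2⟩
  exact CuspAux.aux r (Fin r) (by simp) β M M' hM2 hM'2 htr S hS2
end

section
/- Let k be an algebraically closed field, r ≥ 1, and β : {1,…,r} → {0,1} a block function. If M is a brick for the cuspidal matrix problem and c ∈ k, then M + c·I is again a brick, and M + c·I is equivalent to M if and only if r·c = 0 in k; in particular, if k has characteristic 0 then M + c·I is equivalent to M only for c = 0. (This is the matrix formulation of Theorem 1.2(ii) for the cuspidal cubic: the Jacobian Pic⁰(E) ≅ k acts transitively on the simple vector bundles of fixed rank r and degree, with trivial stabilizer.) -/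
/-- Equivalence of admissible matrices for the cuspidal matrix problem. -/
def CuspEquiv {k : Type*} [Field k] {r : ℕ} (β : Fin r → Fin 2)
    (M M' : Matrix (Fin r) (Fin r) k) : Prop :=
  ∃ S T : Matrix (Fin r) (Fin r) k,
    CuspHom β M M' S ∧ CuspHom β M' M T ∧ S * T = 1 ∧ T * S = 1


open Module LinearMap Function

section MatrixParts

variable {k : Type*} [Field k] {r : ℕ} (β : Fin r → Fin 2)

-- Fin 2 order facts
lemma fin2_not_le {x y : Fin 2} (h : ¬ x ≤ y) : x = 1 ∧ y = 0 := by
  revert h; revert x y; decide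

lemma fin2_lt {x y : Fin 2} (h : x < y) : x = 0 ∧ y = 1 := by
  revert h; revert x y; decide

-- Part 1 : brick preservation
lemma cusp_hom_translate (M S : Matrix (Fin r) (Fin r) k) (c : k) :
    CuspHom β (M + c • (1 : Matrix (Fin r) (Fin r) k)) (M + c • (1 : Matrix (Fin r) (Fin r) k)) S
      ↔ CuspHom β M M S := by
  have h : S * (M + c • (1 : Matrix (Fin r) (Fin r) k))
      - (M + c • (1 : Matrix (Fin r) (Fin r) k)) * S = S * M - M * S := by
    rw [Matrix.mul_add, Matrix.add_mul, Matrix.mul_smul, Matrix.smul_mul, mul_one, one_mul]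
    abel
  unfold CuspHom
  rw [h]

lemma cusp_brick_translate (M : Matrix (Fin r) (Fin r) k) (hM : CuspBrick β M) (c : k) :
    CuspBrick β (M + c • (1 : Matrix (Fin r) (Fin r) k)) := by
  constructor
  · intro i j h
    have h1 : M i j = 0 := hM.1 i j h
    have hij : i ≠ j := by
      rintro rfl; exact h le_rfl
    simp [Matrix.add_apply, Matrix.smul_apply, h1, Matrix.one_apply_ne hij]
  · intro S hS
    exact hM.2 S ((cusp_hom_translate β M S c).mp hS)

-- Part 2 forward: trace argument
lemma cusp_equiv_imp (M : Matrix (Fin r) (Fin r) k) (c : k)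
    (h : CuspEquiv β (M + c • (1 : Matrix (Fin r) (Fin r) k)) M) : (r : k) * c = 0 := by
  obtain ⟨S, T, hS, hT, hST, hTS⟩ := h
  set Mc := M + c • (1 : Matrix (Fin r) (Fin r) k) with hMc
  set C := S * Mc - M * S with hC
  have htr : Matrix.trace (C * T) = c * r := by
    have : C * T = S * Mc * T - M * (S * T) := by
      rw [hC, Matrix.sub_mul, Matrix.mul_assoc, Matrix.mul_assoc]
    rw [this, hST, mul_one, Matrix.trace_sub]
    have h2 : Matrix.trace (S * Mc * T) = Matrix.trace Mc := by
      rw [Matrix.trace_mul_cycle, Matrix.mul_assoc, ← Matrix.mul_assoc, hTS, one_mul]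
    rw [h2, hMc, Matrix.trace_add, Matrix.trace_smul, Matrix.trace_one]
    simp [mul_comm]
  have hzero : Matrix.trace (C * T) = 0 := by
    rw [Matrix.trace]
    apply Finset.sum_eq_zero
    intro i _
    rw [Matrix.diag_apply, Matrix.mul_apply]
    apply Finset.sum_eq_zero
    intro a _
    rcases le_or_gt (β i) (β a) with hle | hlt
    · have h0 : C i a = 0 := hS.2 i a hle
      rw [h0, zero_mul]
    · rw [hT.1 a i hlt, mul_zero]
  have : c * r = 0 := by rw [← htr, hzero]
  rw [mul_comm] at this
  exact this

end MatrixParts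

section Triple

universe u

variable {k : Type v} [Field k]

/-- Morphism equations for the cuspidal triple problem with weights. -/
def THom {V0 V1 : Type u} [AddCommGroup V0] [Module k V0] [AddCommGroup V1] [Module k V1]
    (A : V0 →ₗ[k] V0) (D : V1 →ₗ[k] V1) (B : V1 →ₗ[k] V0) (l0 l1 : k)
    (X : V0 →ₗ[k] V0) (W : V1 →ₗ[k] V1) (Z : V0 →ₗ[k] V1) : Prop :=
  (∀ x : V1, X (B x) = B (W x)) ∧
  (∀ x : V0, X (A x) - A (X x) + l0 • X x = B (Z x)) ∧
  (∀ x : V1, W (D x) - D (W x) + l1 • W x + Z (B x) = 0)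

/-- Brick condition for the cuspidal triple problem. -/
def TBrick {V0 V1 : Type u} [AddCommGroup V0] [Module k V0] [AddCommGroup V1] [Module k V1]
    (A : V0 →ₗ[k] V0) (D : V1 →ₗ[k] V1) (B : V1 →ₗ[k] V0) : Prop :=
  ∀ X W Z, THom A D B 0 0 X W Z →
    ∃ c : k, (∀ x, X x = c • x) ∧ (∀ x, W x = c • x) ∧ ∀ x, Z x = 0

lemma finrank_le_one_of_scalar {V : Type u} [AddCommGroup V] [Module k V]
    [FiniteDimensional k V] (h : ∀ X : V →ₗ[k] V, ∃ c : k, ∀ x, X x = c • x) :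
    Module.finrank k V ≤ 1 := by
  by_contra hc
  push_neg at hc
  set b := Module.finBasis k V with hb
  have h2 : 1 < Module.finrank k V := hc
  let i0 : Fin (Module.finrank k V) := ⟨0, by omega⟩
  let i1 : Fin (Module.finrank k V) := ⟨1, by omega⟩
  have hne : i1 ≠ i0 := by simp [i0, i1, Fin.ext_iff]
  let X : V →ₗ[k] V := b.constr k (fun i => if i = i0 then b i0 else 0)
  obtain ⟨c, hcX⟩ := h X
  have e0 : X (b i0) = b i0 := by simp [X, Basis.constr_basis]
  have e1 : X (b i1) = 0 := by simp [X, Basis.constr_basis, hne]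
  have hc0 : c = 0 := by
    have := (hcX (b i1)).symm.trans e1
    rcases smul_eq_zero.mp this with h' | h'
    · exact h'
    · exact absurd h' (b.ne_zero i1)
  have : b i0 = 0 := by
    have := (hcX (b i0)).symm.trans e0
    rw [hc0, zero_smul] at this
    exact this.symm
  exact b.ne_zero i0 this

set_option maxHeartbeats 3000000 in
theorem key_triple (n : ℕ) : ∀ (V0 V1 : Type u) [AddCommGroup V0] [Module k V0]
    [AddCommGroup V1] [Module k V1] [FiniteDimensional k V0] [FiniteDimensional k V1]
    (A : V0 →ₗ[k] V0) (D : V1 →ₗ[k] V1) (B : V1 →ₗ[k] V0) (l0 l1 : k),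
    Module.finrank k V0 + Module.finrank k V1 ≤ n → TBrick A D B →
    (Module.finrank k V0) • l0 + (Module.finrank k V1) • l1 = 0 →
    ∃ (X : V0 →ₗ[k] V0) (W : V1 →ₗ[k] V1) (Z : V0 →ₗ[k] V1),
      Function.Bijective X ∧ Function.Bijective W ∧ THom A D B l0 l1 X W Z := by
  induction n with
  | zero =>
    intro V0 V1 _ _ _ _ _ _ A D B l0 l1 hn _ _
    have h0 : Module.finrank k V0 = 0 := by omega
    have h1 : Module.finrank k V1 = 0 := by omega
    have : Subsingleton V0 := Module.finrank_zero_iff.mp h0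
    have : Subsingleton V1 := Module.finrank_zero_iff.mp h1
    exact ⟨LinearMap.id, LinearMap.id, 0, Function.bijective_id, Function.bijective_id,
      fun x => Subsingleton.elim _ _, fun x => Subsingleton.elim _ _,
      fun x => Subsingleton.elim _ _⟩
  | succ n ih =>
    intro V0 V1 _ _ _ _ _ _ A D B l0 l1 hn hbrick hw
    by_cases hs1 : Module.finrank k V1 = 0
    · -- V1 trivial
      have hV1 : Subsingleton V1 := Module.finrank_zero_iff.mp hs1
      have hscal : ∀ X : V0 →ₗ[k] V0, (∀ x, X (A x) = A (X x)) →
          ∃ c : k, ∀ x, X x = c • x := by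
        intro X hX
        obtain ⟨c, hc, -, -⟩ := hbrick X 0 0
          ⟨fun x => by
              have hx : x = (0 : V1) := Subsingleton.elim _ _
              simp [hx],
            fun x => by simp [hX x],
            fun x => Subsingleton.elim _ _⟩
        exact ⟨c, hc⟩
      obtain ⟨cA, hcA⟩ := hscal A (fun x => rfl)
      have hall : ∀ X : V0 →ₗ[k] V0, ∃ c : k, ∀ x, X x = c • x := by
        intro X
        apply hscal
        intro x
        rw [hcA x, map_smul, hcA (X x)]
      have hle := finrank_le_one_of_scalar hall
      rcases Nat.le_one_iff_eq_zero_or_eq_one.mp hle with h0 | h1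
      · have : Subsingleton V0 := Module.finrank_zero_iff.mp h0
        exact ⟨LinearMap.id, LinearMap.id, 0, Function.bijective_id, Function.bijective_id,
          fun x => Subsingleton.elim _ _, fun x => Subsingleton.elim _ _,
          fun x => Subsingleton.elim _ _⟩
      · have hl0 : l0 = 0 := by
          rw [h1, hs1] at hw; simpa using hw
        refine ⟨LinearMap.id, LinearMap.id, 0, Function.bijective_id, Function.bijective_id,
          fun x => by rw [Subsingleton.elim x (0 : V1)]; simp,
          fun x => by simp [hl0], fun x => Subsingleton.elim _ _⟩
    · by_cases hs0 : Module.finrank k V0 = 0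
      · -- V0 trivial
        have hV0 : Subsingleton V0 := Module.finrank_zero_iff.mp hs0
        have hscal : ∀ W : V1 →ₗ[k] V1, (∀ x, W (D x) = D (W x)) →
            ∃ c : k, ∀ x, W x = c • x := by
          intro W hW
          obtain ⟨c, -, hc, -⟩ := hbrick 0 W 0
            ⟨fun x => Subsingleton.elim _ _,
             fun x => Subsingleton.elim _ _,
             fun x => by simp [hW x]⟩
          exact ⟨c, hc⟩
        obtain ⟨cD, hcD⟩ := hscal D (fun x => rfl)
        have hall : ∀ W : V1 →ₗ[k] V1, ∃ c : k, ∀ x, W x = c • x := by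
          intro W
          apply hscal
          intro x
          rw [hcD x, map_smul, hcD (W x)]
        have hle := finrank_le_one_of_scalar hall
        rcases Nat.le_one_iff_eq_zero_or_eq_one.mp hle with h0 | h1
        · exact absurd h0 hs1
        · have hl1 : l1 = 0 := by
            rw [h1, hs0] at hw; simpa using hw
          refine ⟨LinearMap.id, LinearMap.id, 0, Function.bijective_id, Function.bijective_id,
            fun x => Subsingleton.elim _ _, fun x => Subsingleton.elim _ _,
            fun x => by simp [hl1]⟩
      · -- mixed case
        by_cases hsurj : Function.Surjective B
        · -- surjective reduction
          obtain ⟨σ, hσ⟩ := B.exists_rightInverse_of_surjective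
            (LinearMap.range_eq_top.mpr hsurj)
          have hBσ : ∀ x, B (σ x) = x := fun x => by
            have := LinearMap.ext_iff.mp hσ x
            simpa using this
          set K := LinearMap.ker B with hK
          set ι : K →ₗ[k] V1 := K.subtype with hι
          have hπmem : ∀ v : V1, ((LinearMap.id : V1 →ₗ[k] V1) - σ ∘ₗ B) v ∈ K := fun v => by
            simp [hK, LinearMap.mem_ker, map_sub, hBσ]
          set π : V1 →ₗ[k] K := LinearMap.codRestrict K ((LinearMap.id : V1 →ₗ[k] V1) - σ ∘ₗ B) hπmem
            with hπdef
          have hπ : ∀ v : V1, (ι (π v) : V1) = v - σ (B v) := fun v => by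
            simp [hπdef, hι, LinearMap.codRestrict_apply]
          have hBι : ∀ y : K, B (ι y) = 0 := fun y => y.2
          have hπι : ∀ y : K, π (ι y) = y := fun y => by
            apply Subtype.val_injective
            show ι (π (ι y)) = ι y
            rw [hπ (ι y), hBι y, map_zero, sub_zero]
          have hπσ : ∀ x : V0, π (σ x) = 0 := fun x => by
            apply Subtype.val_injective
            show ι (π (σ x)) = ι 0
            rw [hπ (σ x), hBσ x, sub_self, map_zero]
          have hdec : ∀ v : V1, σ (B v) + ι (π v) = v := fun v => by
            rw [hπ v]; abel
          set D' : V1 →ₗ[k] V1 := D + σ ∘ₗ (A ∘ₗ B) with hD'def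
          have hDpt : ∀ v, D v = D' v - σ (A (B v)) := fun v => by
            simp [hD'def]
          set Ar : V0 →ₗ[k] V0 := B ∘ₗ (D' ∘ₗ σ) with hAr
          set Br : K →ₗ[k] V0 := B ∘ₗ (D' ∘ₗ ι) with hBr
          set Dr : K →ₗ[k] K := π ∘ₗ (D' ∘ₗ ι) with hDr
          set Cr : V0 →ₗ[k] K := π ∘ₗ (D' ∘ₗ σ) with hCr
          have lift : ∀ (μ0 μ1 : k) (Xt : V0 →ₗ[k] V0) (Wt : K →ₗ[k] K) (Zt : V0 →ₗ[k] K),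
              THom Ar Dr Br μ0 μ1 Xt Wt Zt →
              ∃ (W : V1 →ₗ[k] V1) (Z : V0 →ₗ[k] V1),
                THom A D B (μ0 - μ1) μ1 Xt W Z ∧
                (∀ y : K, W (ι y) = ι (Wt y)) ∧
                (∀ x : V0, W (σ x) = σ (Xt x) + ι (Zt x)) ∧
                (Function.Bijective Xt → Function.Bijective Wt → Function.Bijective W) := by
            rintro μ0 μ1 Xt Wt Zt ⟨hr1, hr2, hr3⟩
            have hr1' : ∀ y : K, Xt (B (D' (ι y))) = B (D' (ι (Wt y))) := fun y => by
              simpa [hBr] using hr1 y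
            have hr2' : ∀ x : V0, Xt (B (D' (σ x))) - B (D' (σ (Xt x))) + μ0 • Xt x
                = B (D' (ι (Zt x))) := fun x => by
              simpa [hAr, hBr] using hr2 x
            have hr3' : ∀ y : K, Wt (π (D' (ι y))) - π (D' (ι (Wt y))) + μ1 • Wt y
                + Zt (B (D' (ι y))) = 0 := fun y => by
              simpa [hDr, hBr] using hr3 y
            set W : V1 →ₗ[k] V1 := σ ∘ₗ (Xt ∘ₗ B) + ι ∘ₗ (Wt ∘ₗ π) + ι ∘ₗ (Zt ∘ₗ B)
              with hWdef
            set zc : V0 →ₗ[k] K :=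
              -(Zt ∘ₗ Ar + Wt ∘ₗ Cr - Cr ∘ₗ Xt - Dr ∘ₗ Zt - Zt ∘ₗ A + μ1 • Zt) with hzcdef
            set G : V0 →ₗ[k] V0 := Xt ∘ₗ A - A ∘ₗ Xt + (μ0 - μ1) • Xt with hGdef
            set Z : V0 →ₗ[k] V1 := σ ∘ₗ G + ι ∘ₗ zc with hZdef
            have hWapp : ∀ v, W v = σ (Xt (B v)) + ι (Wt (π v)) + ι (Zt (B v)) := fun v => by
              simp [hWdef]
            have hzcapp : ∀ x, zc x = -(Zt (B (D' (σ x))) + Wt (π (D' (σ x)))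
                - π (D' (σ (Xt x))) - π (D' (ι (Zt x))) - Zt (A x) + μ1 • Zt x) := fun x => by
              simp [hzcdef, hAr, hCr, hDr]
            have hZapp : ∀ x, Z x = σ (Xt (A x) - A (Xt x) + (μ0 - μ1) • Xt x) + ι (zc x) :=
              fun x => by simp [hZdef, hGdef]
            have hWι : ∀ y : K, W (ι y) = ι (Wt y) := fun y => by
              rw [hWapp, hBι, hπι]
              simp
            have hWσ : ∀ x : V0, W (σ x) = σ (Xt x) + ι (Zt x) := fun x => by
              rw [hWapp, hBσ, hπσ]
              simp
            have heq1 : ∀ x : V1, Xt (B x) = B (W x) := fun x => by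
              rw [hWapp]
              simp [hBσ, hBι]
            have heq2 : ∀ x : V0, Xt (A x) - A (Xt x) + (μ0 - μ1) • Xt x = B (Z x) :=
              fun x => by
              rw [hZapp]
              simp [hBσ, hBι]
            have h3σ : ∀ a : V0,
                W (D (σ a)) - D (W (σ a)) + μ1 • W (σ a) + Z (B (σ a)) = 0 := by
              intro a
              have hB0 : B (W (D (σ a)) - D (W (σ a)) + μ1 • W (σ a) + Z (B (σ a))) = 0 := by
                simp only [hDpt, hWapp, hZapp, hzcapp, map_add, map_sub, map_smul, map_neg,
                  hBσ, hBι, hπσ, hπι, map_zero, smul_zero, add_zero, zero_add, sub_zero,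
                  neg_zero]
                linear_combination (norm := module) hr2' a
              have hπ0 : π (W (D (σ a)) - D (W (σ a)) + μ1 • W (σ a) + Z (B (σ a))) = 0 := by
                simp only [hDpt, hWapp, hZapp, hzcapp, map_add, map_sub, map_smul, map_neg,
                  hBσ, hBι, hπσ, hπι, map_zero, smul_zero, add_zero, zero_add, sub_zero,
                  neg_zero]
                module
              rw [← hdec (W (D (σ a)) - D (W (σ a)) + μ1 • W (σ a) + Z (B (σ a))), hB0, hπ0,
                map_zero, map_zero, add_zero]
            have h3ι : ∀ b : K,
                W (D (ι b)) - D (W (ι b)) + μ1 • W (ι b) + Z (B (ι b)) = 0 := by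
              intro b
              have hB0 : B (W (D (ι b)) - D (W (ι b)) + μ1 • W (ι b) + Z (B (ι b))) = 0 := by
                simp only [hDpt, hWapp, hZapp, hzcapp, map_add, map_sub, map_smul, map_neg,
                  hBσ, hBι, hπσ, hπι, map_zero, smul_zero, add_zero, zero_add, sub_zero,
                  neg_zero]
                linear_combination (norm := module) hr1' b
              have hπ0 : π (W (D (ι b)) - D (W (ι b)) + μ1 • W (ι b) + Z (B (ι b))) = 0 := by
                simp only [hDpt, hWapp, hZapp, hzcapp, map_add, map_sub, map_smul, map_neg,
                  hBσ, hBι, hπσ, hπι, map_zero, smul_zero, add_zero, zero_add, sub_zero,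
                  neg_zero]
                linear_combination (norm := module) hr3' b
              rw [← hdec (W (D (ι b)) - D (W (ι b)) + μ1 • W (ι b) + Z (B (ι b))), hB0, hπ0,
                map_zero, map_zero, add_zero]
            have heq3 : ∀ v : V1, W (D v) - D (W v) + μ1 • W v + Z (B v) = 0 := by
              intro v
              have hv := hdec v
              conv_lhs => rw [← hv]
              simp only [map_add, smul_add]
              linear_combination (norm := module) h3σ (B v) + h3ι (π v)
            refine ⟨W, Z, ⟨heq1, heq2, heq3⟩, hWι, hWσ, ?_⟩
            intro hXt hWt
            have hkerW : ∀ v, W v = 0 → v = 0 := by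
              intro v hv
              have hBv0 : B v = 0 := by
                apply hXt.1
                rw [heq1 v, hv, map_zero, map_zero]
              have h1 : (0 : V1) = σ (Xt (B v)) + ι (Wt (π v)) + ι (Zt (B v)) := by
                rw [← hWapp v, hv]
              rw [hBv0] at h1
              simp only [map_zero, zero_add, add_zero] at h1
              have hπv : π v = 0 := by
                apply hWt.1
                apply Subtype.val_injective
                simp only [map_zero]
                rw [show ((Wt (π v) : K) : V1) = ι (Wt (π v)) from rfl, ← h1]
                rfl
              rw [← hdec v, hBv0, hπv, map_zero, map_zero, add_zero]
            have hinjW : Function.Injective W := by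
              intro a b hab
              have h0 : W (a - b) = 0 := by rw [map_sub, hab, sub_self]
              have := hkerW _ h0
              exact sub_eq_zero.mp this
            exact ⟨hinjW, LinearMap.injective_iff_surjective.mp hinjW⟩
          -- brick transfers to the reduced problem
          have hbrickr : TBrick Ar Dr Br := by
            intro Xt Wt Zt hred
            obtain ⟨W, Z, hthom, hWι, hWσ, -⟩ := lift 0 0 Xt Wt Zt hred
            rw [show (0:k) - 0 = 0 by ring] at hthom
            obtain ⟨c, hX, hW, hZ⟩ := hbrick Xt W Z hthom
            refine ⟨c, hX, fun y => ?_, fun x => ?_⟩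
            · apply Subtype.val_injective
              have := hWι y
              rw [hW (ι y)] at this
              rw [show ((Wt y : K) : V1) = ι (Wt y) from rfl, ← this]
              rfl
            · have h2 : c • σ x = σ (Xt x) + ι (Zt x) := by
                rw [← hWσ x, hW (σ x)]
              rw [hX x, map_smul] at h2
              have h3 : ι (Zt x) = 0 := by
                linear_combination (norm := module) (-1 : k) • h2
              apply Subtype.val_injective
              show ι (Zt x) = ι 0
              rw [h3, map_zero]
          -- dimension bookkeeping
          have hrange : LinearMap.range B = ⊤ := LinearMap.range_eq_top.mpr hsurj
          have hdim : Module.finrank k V0 + Module.finrank k K = Module.finrank k V1 := by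
            have h := LinearMap.finrank_range_add_finrank_ker B
            rwa [hrange, finrank_top] at h
          have hs0pos : 0 < Module.finrank k V0 := Nat.pos_of_ne_zero hs0
          have hn' : Module.finrank k V0 + Module.finrank k K ≤ n := by omega
          have hw' : (Module.finrank k V0) • (l0 + l1) + (Module.finrank k K) • l1 = 0 := by
            have hdimk := congrArg (fun m : ℕ => (m : k)) hdim
            push_cast at hdimk
            simp only [nsmul_eq_mul] at hw ⊢
            linear_combination hw + l1 * hdimk
          obtain ⟨Xt, Wt, Zt, hbX, hbW, hthomr⟩ :=
            ih V0 K Ar Dr Br (l0 + l1) l1 hn' hbrickr hw'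
          obtain ⟨W, Z, hthom, -, -, hbij⟩ := lift (l0 + l1) l1 Xt Wt Zt hthomr
          rw [show l0 + l1 - l1 = l0 by ring] at hthom
          exact ⟨Xt, W, Z, hbX, hbij hbX hbW, hthom⟩

        · by_cases hinj : Function.Injective B
          · -- injective reduction
            obtain ⟨ρ, hρ⟩ := B.exists_leftInverse_of_injective
              (LinearMap.ker_eq_bot.mpr hinj)
            have hρB : ∀ x, ρ (B x) = x := fun x => by
              have := LinearMap.ext_iff.mp hρ x
              simpa using this
            set K := LinearMap.ker ρ with hK
            set ι : K →ₗ[k] V0 := K.subtype with hι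
            have hπmem : ∀ v : V0, ((LinearMap.id : V0 →ₗ[k] V0) - B ∘ₗ ρ) v ∈ K :=
              fun v => by simp [hK, LinearMap.mem_ker, map_sub, hρB]
            set π : V0 →ₗ[k] K :=
              LinearMap.codRestrict K ((LinearMap.id : V0 →ₗ[k] V0) - B ∘ₗ ρ) hπmem with hπdef
            have hπ : ∀ v : V0, (ι (π v) : V0) = v - B (ρ v) := fun v => by
              simp [hπdef, hι, LinearMap.codRestrict_apply]
            have hρι : ∀ y : K, ρ (ι y) = 0 := fun y => y.2
            have hπι : ∀ y : K, π (ι y) = y := fun y => by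
              apply Subtype.val_injective
              show ι (π (ι y)) = ι y
              rw [hπ (ι y), hρι y, map_zero, sub_zero]
            have hπB : ∀ x : V1, π (B x) = 0 := fun x => by
              apply Subtype.val_injective
              show ι (π (B x)) = ι 0
              rw [hπ (B x), hρB x, sub_self, map_zero]
            have hdec : ∀ v : V0, B (ρ v) + ι (π v) = v := fun v => by
              rw [hπ v]; abel
            set Dr2 : V1 →ₗ[k] V1 := D + ρ ∘ₗ (A ∘ₗ B) with hDr2
            set Ar2 : K →ₗ[k] K := π ∘ₗ (A ∘ₗ ι) with hAr2
            set Br2 : V1 →ₗ[k] K := π ∘ₗ (A ∘ₗ B) with hBr2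
            have lift : ∀ (μ0 μ1 : k) (Xr : K →ₗ[k] K) (Wr : V1 →ₗ[k] V1) (Zr : K →ₗ[k] V1),
                THom Ar2 Dr2 Br2 μ0 μ1 Xr Wr Zr →
                ∃ (X : V0 →ₗ[k] V0) (Z : V0 →ₗ[k] V1),
                  THom A D B μ0 (μ1 - μ0) X Wr Z ∧
                  (∀ b : K, X (ι b) = ι (Xr b) + B (Zr b)) ∧
                  (Function.Bijective Xr → Function.Bijective Wr → Function.Bijective X) := by
              rintro μ0 μ1 Xr Wr Zr ⟨hr1, hr2, hr3⟩
              have hr1' : ∀ a : V1, Xr (π (A (B a))) = π (A (B (Wr a))) := fun a => by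
                simpa [hBr2] using hr1 a
              have hr2' : ∀ b : K, Xr (π (A (ι b))) - π (A (ι (Xr b))) + μ0 • Xr b
                  = π (A (B (Zr b))) := fun b => by
                simpa [hAr2, hBr2] using hr2 b
              have hr3' : ∀ a : V1, Wr (D a) + Wr (ρ (A (B a))) - (D (Wr a) + ρ (A (B (Wr a))))
                  + μ1 • Wr a + Zr (π (A (B a))) = 0 := fun a => by
                simpa [hDr2, hBr2] using hr3 a
              set X : V0 →ₗ[k] V0 := B ∘ₗ (Wr ∘ₗ ρ) + ι ∘ₗ (Xr ∘ₗ π) + B ∘ₗ (Zr ∘ₗ π)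
                with hXdef
              set H : V1 →ₗ[k] V1 := Wr ∘ₗ D - D ∘ₗ Wr + (μ1 - μ0) • Wr with hHdef
              set yy : K →ₗ[k] V1 := Wr ∘ₗ (ρ ∘ₗ (A ∘ₗ ι)) + Zr ∘ₗ Ar2
                - (ρ ∘ₗ (A ∘ₗ B)) ∘ₗ Zr - (ρ ∘ₗ (A ∘ₗ ι)) ∘ₗ Xr + μ0 • Zr with hyydef
              set Z : V0 →ₗ[k] V1 := -(H ∘ₗ ρ) + yy ∘ₗ π with hZdef
              have hXapp : ∀ v, X v = B (Wr (ρ v)) + ι (Xr (π v)) + B (Zr (π v)) := fun v => by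
                simp [hXdef]
              have hZapp : ∀ v, Z v = -(Wr (D (ρ v)) - D (Wr (ρ v)) + (μ1 - μ0) • Wr (ρ v))
                  + (Wr (ρ (A (ι (π v)))) + Zr (π (A (ι (π v)))) - ρ (A (B (Zr (π v))))
                    - ρ (A (ι (Xr (π v)))) + μ0 • Zr (π v)) := fun v => by
                simp [hZdef, hHdef, hyydef, hAr2]
              have heq1 : ∀ x : V1, X (B x) = B (Wr x) := fun x => by
                rw [hXapp, hρB, hπB]
                simp
              have heq3 : ∀ x : V1, Wr (D x) - D (Wr x) + (μ1 - μ0) • Wr x + Z (B x) = 0 :=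
                fun x => by
                rw [hZapp, hρB, hπB]
                simp only [map_zero, smul_zero, add_zero, sub_zero, zero_add, zero_sub,
                  neg_zero, smul_zero]
                module
              have h2B : ∀ a : V1,
                  X (A (B a)) - A (X (B a)) + μ0 • X (B a) - B (Z (B a)) = 0 := by
                intro a
                have hρ0 : ρ (X (A (B a)) - A (X (B a)) + μ0 • X (B a) - B (Z (B a))) = 0 := by
                  simp only [hXapp, hZapp, map_add, map_sub, map_smul, map_neg, hρB, hρι,
                    hπB, hπι, map_zero, smul_zero, add_zero, zero_add, sub_zero, neg_zero]
                  linear_combination (norm := module) hr3' a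
                have hπ0 : π (X (A (B a)) - A (X (B a)) + μ0 • X (B a) - B (Z (B a))) = 0 := by
                  simp only [hXapp, hZapp, map_add, map_sub, map_smul, map_neg, hρB, hρι,
                    hπB, hπι, map_zero, smul_zero, add_zero, zero_add, sub_zero, neg_zero]
                  linear_combination (norm := module) hr1' a
                rw [← hdec (X (A (B a)) - A (X (B a)) + μ0 • X (B a) - B (Z (B a))), hρ0, hπ0,
                  map_zero, map_zero, add_zero]
              have h2ι : ∀ b : K,
                  X (A (ι b)) - A (X (ι b)) + μ0 • X (ι b) - B (Z (ι b)) = 0 := by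
                intro b
                have hρ0 : ρ (X (A (ι b)) - A (X (ι b)) + μ0 • X (ι b) - B (Z (ι b))) = 0 := by
                  simp only [hXapp, hZapp, map_add, map_sub, map_smul, map_neg, hρB, hρι,
                    hπB, hπι, map_zero, smul_zero, add_zero, zero_add, sub_zero, neg_zero]
                  module
                have hπ0 : π (X (A (ι b)) - A (X (ι b)) + μ0 • X (ι b) - B (Z (ι b))) = 0 := by
                  simp only [hXapp, hZapp, map_add, map_sub, map_smul, map_neg, hρB, hρι,
                    hπB, hπι, map_zero, smul_zero, add_zero, zero_add, sub_zero, neg_zero]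
                  linear_combination (norm := module) hr2' b
                rw [← hdec (X (A (ι b)) - A (X (ι b)) + μ0 • X (ι b) - B (Z (ι b))), hρ0, hπ0,
                  map_zero, map_zero, add_zero]
              have heq2 : ∀ x : V0, X (A x) - A (X x) + μ0 • X x = B (Z x) := by
                intro x
                have hx := hdec x
                have hcomb : X (A x) - A (X x) + μ0 • X x - B (Z x) = 0 := by
                  conv_lhs => rw [← hx]
                  simp only [map_add, smul_add]
                  linear_combination (norm := module) h2B (ρ x) + h2ι (π x)
                linear_combination (norm := module) hcomb
              have hXι : ∀ b : K, X (ι b) = ι (Xr b) + B (Zr b) := fun b => by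
                rw [hXapp, hρι, hπι]
                simp
              refine ⟨X, Z, ⟨heq1, heq2, heq3⟩, hXι, ?_⟩
              intro hXr hWr
              have hkerX : ∀ v, X v = 0 → v = 0 := by
                intro v hv
                have hπv : π v = 0 := by
                  apply hXr.1
                  have h1 : π (X v) = Xr (π v) := by
                    rw [hXapp]
                    simp only [map_add, hπB, hπι, map_zero, zero_add, add_zero]
                  rw [map_zero]
                  rw [← h1, hv, map_zero]
                have hρv : ρ v = 0 := by
                  apply hWr.1
                  have h1 : ρ (X v) = Wr (ρ v) := by
                    rw [hXapp]
                    simp only [map_add, hρB, hρι, map_zero, zero_add, add_zero, hπv]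
                  rw [map_zero, ← h1, hv, map_zero]
                rw [← hdec v, hρv, hπv, map_zero, map_zero, add_zero]
              have hinjX : Function.Injective X := by
                intro a b hab
                have h0 : X (a - b) = 0 := by rw [map_sub, hab, sub_self]
                exact sub_eq_zero.mp (hkerX _ h0)
              exact ⟨hinjX, LinearMap.injective_iff_surjective.mp hinjX⟩
            have hbrickr : TBrick Ar2 Dr2 Br2 := by
              intro Xr Wr Zr hred
              obtain ⟨X, Z, hthom, hXι, -⟩ := lift 0 0 Xr Wr Zr hred
              rw [show (0:k) - 0 = 0 by ring] at hthom
              obtain ⟨c, hX, hW, hZ⟩ := hbrick X Wr Z hthom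
              have hZr : ∀ b : K, Zr b = 0 := by
                intro b
                have h2 : c • ι b = ι (Xr b) + B (Zr b) := by
                  rw [← hXι b, hX (ι b)]
                have h3 := congrArg ρ h2
                simp only [map_add, map_smul, hρι, hρB, smul_zero, zero_add] at h3
                exact h3.symm
              refine ⟨c, fun b => ?_, hW, hZr⟩
              have h2 : c • ι b = ι (Xr b) + B (Zr b) := by
                rw [← hXι b, hX (ι b)]
              rw [hZr b, map_zero, add_zero] at h2
              apply Subtype.val_injective
              show ι (Xr b) = ι (c • b)
              rw [← h2, map_smul]
            have hρsurj : Function.Surjective ρ := fun y => ⟨B y, hρB y⟩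
            have hdim : Module.finrank k V1 + Module.finrank k K = Module.finrank k V0 := by
              have h := LinearMap.finrank_range_add_finrank_ker ρ
              rwa [LinearMap.range_eq_top.mpr hρsurj, finrank_top] at h
            have hs1pos : 0 < Module.finrank k V1 := Nat.pos_of_ne_zero hs1
            have hn' : Module.finrank k K + Module.finrank k V1 ≤ n := by omega
            have hw' : (Module.finrank k K) • l0 + (Module.finrank k V1) • (l0 + l1) = 0 := by
              have hdimk := congrArg (fun m : ℕ => (m : k)) hdim
              push_cast at hdimk
              simp only [nsmul_eq_mul] at hw ⊢
              linear_combination hw + l0 * hdimk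
            obtain ⟨Xr, Wr, Zr, hbXr, hbWr, hthomr⟩ :=
              ih K V1 Ar2 Dr2 Br2 l0 (l0 + l1) hn' hbrickr hw'
            obtain ⟨X, Z, hthom, -, hbij⟩ := lift l0 (l0 + l1) Xr Wr Zr hthomr
            rw [show l0 + l1 - l0 = l1 by ring] at hthom
            exact ⟨X, Wr, Z, hbij hbXr hbWr, hbWr, hthom⟩

          · -- neither: contradicts brick
            exfalso
            have hker : LinearMap.ker B ≠ ⊥ := by rwa [ne_eq, LinearMap.ker_eq_bot]
            obtain ⟨u, hu_mem, hu⟩ := Submodule.exists_mem_ne_zero_of_ne_bot hker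
            have hBu : B u = 0 := LinearMap.mem_ker.mp hu_mem
            have hltRange : LinearMap.range B < ⊤ :=
              lt_top_iff_ne_top.mpr (by rwa [ne_eq, LinearMap.range_eq_top])
            have : Nontrivial (V0 ⧸ LinearMap.range B) :=
              Submodule.Quotient.nontrivial_iff.mpr hltRange.ne
            obtain ⟨q, hq⟩ := exists_ne (0 : V0 ⧸ LinearMap.range B)
            obtain ⟨φ, hφ⟩ : ∃ φ : (V0 ⧸ LinearMap.range B) →ₗ[k] k, φ q ≠ 0 := by
              by_contra hno
              push_neg at hno
              exact hq ((Module.forall_dual_apply_eq_zero_iff k q).mp hno)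
            obtain ⟨x0, rfl⟩ := Submodule.mkQ_surjective _ q
            set f : V0 →ₗ[k] k := φ ∘ₗ (LinearMap.range B).mkQ with hf
            have hfB : ∀ w, f (B w) = 0 := by
              intro w
              simp only [hf, LinearMap.comp_apply]
              rw [show (LinearMap.range B).mkQ (B w) = 0 from
                (Submodule.Quotient.mk_eq_zero _).mpr (LinearMap.mem_range_self B w)]
              exact map_zero φ
            set Z : V0 →ₗ[k] V1 := f.smulRight u with hZ
            obtain ⟨c, -, -, hZ0⟩ := hbrick 0 0 Z
              ⟨fun x => by simp,
               fun x => by simp [hZ, LinearMap.smulRight_apply, hBu],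
               fun x => by simp [hZ, LinearMap.smulRight_apply, hfB]⟩
            have := hZ0 x0
            rw [hZ] at this
            simp only [LinearMap.smulRight_apply] at this
            rcases smul_eq_zero.mp this with h' | h'
            · exact hφ h'
            · exact hu h'

end Triple

section Bridge

variable {k : Type*} [Field k] {r : ℕ} (β : Fin r → Fin 2)

lemma fin2_eq_one {x : Fin 2} (h : ¬ x = 0) : x = 1 := by revert h; revert x; decide

lemma fin2_le_zero {x : Fin 2} (h : x ≤ 0) : x = 0 := by revert h; revert x; decide

lemma submatrix_sub' {m n m' n' : Type*} (A B : Matrix m n k) (f : m' → m) (g : n' → n) :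
    (A - B).submatrix f g = A.submatrix f g - B.submatrix f g := by
  ext i j; simp [Matrix.submatrix_apply, Matrix.sub_apply]

lemma submatrix_add' {m n m' n' : Type*} (A B : Matrix m n k) (f : m' → m) (g : n' → n) :
    (A + B).submatrix f g = A.submatrix f g + B.submatrix f g := by
  ext i j; simp [Matrix.submatrix_apply, Matrix.add_apply]

lemma submatrix_smul' {m n m' n' : Type*} (a : k) (A : Matrix m n k) (f : m' → m) (g : n' → n) :
    (a • A).submatrix f g = a • A.submatrix f g := by
  ext i j; simp [Matrix.submatrix_apply, Matrix.smul_apply]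

variable {b0 b1 : Type*} [Fintype b0] [Fintype b1] [DecidableEq b0] [DecidableEq b1]

lemma lower_of_blocks (e : b0 ⊕ b1 ≃ Fin r)
    (he0 : ∀ a : b0, β (e (Sum.inl a)) = 0) (he1 : ∀ a : b1, β (e (Sum.inr a)) = 1)
    (P : Matrix b0 b0 k) (R : Matrix b1 b0 k) (Q : Matrix b1 b1 k) :
    ∀ i j, β i < β j →
      ((Matrix.fromBlocks P 0 R Q).submatrix ⇑e.symm ⇑e.symm) i j = 0 := by
  intro i j h
  obtain ⟨a, rfl⟩ := e.surjective i
  obtain ⟨b, rfl⟩ := e.surjective j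
  cases a with
  | inl a =>
    cases b with
    | inl b => rw [he0 a, he0 b] at h; exact absurd h (lt_irrefl _)
    | inr b =>
      simp [Matrix.submatrix_apply, Equiv.symm_apply_apply]
  | inr a =>
    cases b with
    | inl b => rw [he1 a, he0 b] at h; exact absurd h (by decide)
    | inr b => rw [he1 a, he1 b] at h; exact absurd h (lt_irrefl _)

lemma exists_blocks (e : b0 ⊕ b1 ≃ Fin r)
    (he0 : ∀ a : b0, β (e (Sum.inl a)) = 0) (he1 : ∀ a : b1, β (e (Sum.inr a)) = 1)
    (M' : Matrix (Fin r) (Fin r) k) (hadm : CuspAdmissible β M') :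
    M' = (Matrix.fromBlocks ((M'.submatrix e e).toBlocks₁₁) ((M'.submatrix e e).toBlocks₁₂)
      0 ((M'.submatrix e e).toBlocks₂₂)).submatrix ⇑e.symm ⇑e.symm := by
  have h21 : (M'.submatrix e e).toBlocks₂₁ = 0 := by
    ext a b
    simp only [Matrix.toBlocks₂₁, Matrix.of_apply, Matrix.submatrix_apply, Matrix.zero_apply]
    apply hadm
    rw [he1 a, he0 b]
    decide
  rw [← h21, Matrix.fromBlocks_toBlocks]
  rw [Matrix.submatrix_submatrix, Equiv.self_comp_symm, Matrix.submatrix_id_id]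

lemma hom_of_blocks (e : b0 ⊕ b1 ≃ Fin r)
    (he0 : ∀ a : b0, β (e (Sum.inl a)) = 0) (he1 : ∀ a : b1, β (e (Sum.inr a)) = 1)
    (M' M'' : Matrix (Fin r) (Fin r) k)
    (m00 n00 : Matrix b0 b0 k) (m01 n01 : Matrix b0 b1 k) (m11 n11 : Matrix b1 b1 k)
    (P : Matrix b0 b0 k) (R : Matrix b1 b0 k) (Q : Matrix b1 b1 k)
    (hM' : M' = (Matrix.fromBlocks m00 m01 0 m11).submatrix ⇑e.symm ⇑e.symm)
    (hM'' : M'' = (Matrix.fromBlocks n00 n01 0 n11).submatrix ⇑e.symm ⇑e.symm)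
    (h1 : P * m01 = n01 * Q)
    (h2 : P * m00 - n00 * P = n01 * R)
    (h3 : R * m01 + Q * m11 - n11 * Q = 0) :
    CuspHom β M' M'' ((Matrix.fromBlocks P 0 R Q).submatrix ⇑e.symm ⇑e.symm) := by
  refine ⟨lower_of_blocks β e he0 he1 P R Q, ?_⟩
  intro i j hle
  have hprod : (Matrix.fromBlocks P 0 R Q).submatrix ⇑e.symm ⇑e.symm * M'
      - M'' * ((Matrix.fromBlocks P 0 R Q).submatrix ⇑e.symm ⇑e.symm)
      = ((Matrix.fromBlocks P 0 R Q * Matrix.fromBlocks m00 m01 0 m11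
        - Matrix.fromBlocks n00 n01 0 n11 * Matrix.fromBlocks P 0 R Q)).submatrix
          ⇑e.symm ⇑e.symm := by
    rw [hM', hM'', Matrix.submatrix_mul_equiv, Matrix.submatrix_mul_equiv, submatrix_sub']
  rw [hprod]
  obtain ⟨a, rfl⟩ := e.surjective i
  obtain ⟨b, rfl⟩ := e.surjective j
  rw [Matrix.fromBlocks_multiply, Matrix.fromBlocks_multiply]
  cases a with
  | inl a =>
    cases b with
    | inl b =>
      have hbm : P * m00 + (0 : Matrix b0 b1 k) * (0 : Matrix b1 b0 k)
          - (n00 * P + n01 * R) = 0 := by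
        rw [Matrix.zero_mul, add_zero, sub_add_eq_sub_sub, h2, sub_self]
      simp only [Matrix.submatrix_apply, Equiv.symm_apply_apply, Matrix.sub_apply,
        Matrix.fromBlocks_apply₁₁]
      rw [← Matrix.sub_apply, hbm, Matrix.zero_apply]
    | inr b =>
      have hbm : P * m01 + (0 : Matrix b0 b1 k) * m11
          - (n00 * (0 : Matrix b0 b1 k) + n01 * Q) = 0 := by
        rw [Matrix.zero_mul, add_zero, Matrix.mul_zero, zero_add, h1, sub_self]
      simp only [Matrix.submatrix_apply, Equiv.symm_apply_apply, Matrix.sub_apply,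
        Matrix.fromBlocks_apply₁₂]
      rw [← Matrix.sub_apply, hbm, Matrix.zero_apply]
  | inr a =>
    cases b with
    | inl b =>
      rw [he1 a, he0 b] at hle
      exact absurd hle (by decide)
    | inr b =>
      have hbm : R * m01 + Q * m11
          - ((0 : Matrix b1 b0 k) * (0 : Matrix b0 b1 k) + n11 * Q) = 0 := by
        rw [Matrix.zero_mul, zero_add]; exact h3
      simp only [Matrix.submatrix_apply, Equiv.symm_apply_apply, Matrix.sub_apply,
        Matrix.fromBlocks_apply₂₂]
      rw [← Matrix.sub_apply, hbm, Matrix.zero_apply]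

lemma hom_inverse (M' M'' S T : Matrix (Fin r) (Fin r) k) (hS : CuspHom β M' M'' S)
    (hTlow : ∀ i j, β i < β j → T i j = 0) (hST : S * T = 1) (hTS : T * S = 1) :
    CuspHom β M'' M' T := by
  refine ⟨hTlow, fun i j hle => ?_⟩
  have halg : T * M'' - M' * T = -(T * (S * M' - M'' * S) * T) := by
    have e1 : T * (S * M' - M'' * S) * T = T * (S * M') * T - T * (M'' * S) * T := by
      rw [Matrix.mul_sub, Matrix.sub_mul]
    have e2 : T * (S * M') * T = M' * T := by
      rw [← Matrix.mul_assoc, hTS, one_mul]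
    have e3 : T * (M'' * S) * T = T * M'' := by
      rw [← Matrix.mul_assoc, Matrix.mul_assoc (T * M'') S T, hST, mul_one]
    rw [e1, e2, e3]
    abel
  rw [halg, Matrix.neg_apply, Matrix.mul_apply, neg_eq_zero]
  apply Finset.sum_eq_zero
  intro a _
  by_cases haj : β a < β j
  · rw [hTlow a j haj, mul_zero]
  · rw [Matrix.mul_apply]
    rw [show (0:k) = (∑ b : Fin r, (0:k)) * T a j by simp]
    congr 1
    apply Finset.sum_congr rfl
    intro b _
    by_cases hba : β b ≤ β a
    · rw [hS.2 b a hba, mul_zero]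
    · have hb1 := (fin2_not_le hba).1
      have ha0 := (fin2_not_le hba).2
      rw [ha0] at haj
      have hj0 : β j = 0 := fin2_le_zero (not_lt.mp haj)
      have hi0 : β i = 0 := fin2_le_zero (hj0 ▸ hle)
      have : β i < β b := by rw [hi0, hb1]; decide
      rw [hTlow i b this, zero_mul]

end Bridge

set_option maxHeartbeats 2000000 in
set_option synthInstance.maxHeartbeats 400000 in
/-- Adding `c·I` to a cuspidal brick gives again a brick, equivalent to the original
one iff `r·c = 0` in `k`; in particular in characteristic zero only for `c = 0`
(the Pic⁰(E) ≅ k action on simple bundles of the cuspidal cubic, with trivial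
stabilizer). -/
theorem cuspidal_brick_translation (k : Type*) [Field k] [IsAlgClosed k]
    (r : ℕ) (hr : 1 ≤ r) (β : Fin r → Fin 2)
    (M : Matrix (Fin r) (Fin r) k) (hM : CuspBrick β M) (c : k) :
    CuspBrick β (M + c • (1 : Matrix (Fin r) (Fin r) k)) ∧
    (CuspEquiv β (M + c • (1 : Matrix (Fin r) (Fin r) k)) M ↔ (r : k) * c = 0) ∧
    (CharZero k → (CuspEquiv β (M + c • (1 : Matrix (Fin r) (Fin r) k)) M → c = 0)) := by
  classical
  refine ⟨cusp_brick_translate β M hM c,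
    ⟨fun h => cusp_equiv_imp β M c h, fun hrc => ?_⟩, fun hchar h => ?_⟩
  · -- construct the equivalence assuming (r : k) * c = 0
    set e : {i // β i = 0} ⊕ {i // ¬ β i = 0} ≃ Fin r :=
      Equiv.sumCompl (fun i => β i = 0) with hedef
    have he0 : ∀ a : {i // β i = 0}, β (e (Sum.inl a)) = 0 := fun a => by
      rw [hedef, Equiv.sumCompl_apply_inl]; exact a.2
    have he1 : ∀ a : {i // ¬ β i = 0}, β (e (Sum.inr a)) = 1 := fun a => by
      rw [hedef, Equiv.sumCompl_apply_inr]; exact fin2_eq_one a.2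
    set m00 := (M.submatrix ⇑e ⇑e).toBlocks₁₁ with hm00d
    set m01 := (M.submatrix ⇑e ⇑e).toBlocks₁₂ with hm01d
    set m11 := (M.submatrix ⇑e ⇑e).toBlocks₂₂ with hm11d
    have hMdec : M = (Matrix.fromBlocks m00 m01 0 m11).submatrix ⇑e.symm ⇑e.symm :=
      exists_blocks β e he0 he1 M hM.1
    have hsm1 : (c • (1 : Matrix (Fin r) (Fin r) k)) =
        (Matrix.fromBlocks (c • 1) (0 : Matrix _ {i // ¬ β i = 0} k)
          (0 : Matrix {i // ¬ β i = 0} _ k) (c • 1)).submatrix ⇑e.symm ⇑e.symm := by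
      have h2 : (Matrix.fromBlocks (c • (1 : Matrix {i // β i = 0} {i // β i = 0} k))
          (0 : Matrix _ {i // ¬ β i = 0} k) (0 : Matrix {i // ¬ β i = 0} _ k)
          (c • (1 : Matrix {i // ¬ β i = 0} {i // ¬ β i = 0} k)))
          = c • Matrix.fromBlocks 1 0 0 1 := by
        rw [Matrix.fromBlocks_smul, smul_zero, smul_zero]
      rw [h2, Matrix.fromBlocks_one, submatrix_smul', Matrix.submatrix_one_equiv]
    have hMcdec : M + c • 1 = (Matrix.fromBlocks (m00 + c • 1) m01 0
        (m11 + c • 1)).submatrix ⇑e.symm ⇑e.symm := by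
      calc M + c • 1
          = (Matrix.fromBlocks m00 m01 0 m11).submatrix ⇑e.symm ⇑e.symm
            + (Matrix.fromBlocks (c • 1) 0 0 (c • 1)).submatrix ⇑e.symm ⇑e.symm := by
            rw [← hMdec, ← hsm1]
        _ = (Matrix.fromBlocks m00 m01 0 m11
            + Matrix.fromBlocks (c • 1) 0 0 (c • 1)).submatrix ⇑e.symm ⇑e.symm := by
            rw [submatrix_add']
        _ = _ := by rw [Matrix.fromBlocks_add, add_zero, add_zero]
    set Am := Matrix.toLin' m00 with hAmd
    set Bm := Matrix.toLin' m01 with hBmd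
    set Dm := Matrix.toLin' m11 with hDmd
    -- the brick property transfers to the triple problem
    have hbrickT : TBrick Am Dm Bm := by
      rintro X W Z ⟨h1, h2, h3⟩
      have hm1 : LinearMap.toMatrix' X * m01 = m01 * LinearMap.toMatrix' W := by
        have hc1 : X ∘ₗ Bm = Bm ∘ₗ W := LinearMap.ext h1
        have := congrArg LinearMap.toMatrix' hc1
        rwa [LinearMap.toMatrix'_comp, LinearMap.toMatrix'_comp, hBmd,
          LinearMap.toMatrix'_toLin'] at this
      have hm2 : LinearMap.toMatrix' X * m00 - m00 * LinearMap.toMatrix' X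
          = m01 * LinearMap.toMatrix' Z := by
        have hc2 : X ∘ₗ Am - Am ∘ₗ X = Bm ∘ₗ Z := by
          refine LinearMap.ext fun x => ?_
          have := h2 x
          simp only [zero_smul, add_zero] at this
          simpa using this
        have := congrArg LinearMap.toMatrix' hc2
        rwa [map_sub, LinearMap.toMatrix'_comp, LinearMap.toMatrix'_comp,
          LinearMap.toMatrix'_comp, hAmd, hBmd, LinearMap.toMatrix'_toLin',
          LinearMap.toMatrix'_toLin'] at this
      have hm3 : LinearMap.toMatrix' Z * m01 + LinearMap.toMatrix' W * m11
          - m11 * LinearMap.toMatrix' W = 0 := by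
        have hc3 : Z ∘ₗ Bm + W ∘ₗ Dm - Dm ∘ₗ W = 0 := by
          refine LinearMap.ext fun x => ?_
          have := h3 x
          simp only [zero_smul, add_zero] at this
          simp only [LinearMap.add_apply, LinearMap.sub_apply, LinearMap.comp_apply,
            LinearMap.zero_apply]
          linear_combination (norm := module) this
        have := congrArg LinearMap.toMatrix' hc3
        rwa [map_sub, map_add, LinearMap.toMatrix'_comp, LinearMap.toMatrix'_comp,
          LinearMap.toMatrix'_comp, hBmd, hDmd, LinearMap.toMatrix'_toLin',
          LinearMap.toMatrix'_toLin', map_zero] at this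
      obtain ⟨c0, hc0⟩ := hM.2 _ (hom_of_blocks β e he0 he1 M M m00 m00 m01 m01 m11 m11
        (LinearMap.toMatrix' X) (LinearMap.toMatrix' Z) (LinearMap.toMatrix' W)
        hMdec hMdec hm1 hm2 hm3)
      have hfold : Matrix.fromBlocks (LinearMap.toMatrix' X) 0 (LinearMap.toMatrix' Z)
          (LinearMap.toMatrix' W) = Matrix.fromBlocks (c0 • 1) 0 0 (c0 • 1) := by
        have h4 := congrArg (fun N => N.submatrix ⇑e ⇑e) hc0
        simp only [Matrix.submatrix_submatrix, Equiv.symm_comp_self,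
          Matrix.submatrix_id_id] at h4
        rw [h4, submatrix_smul', Matrix.submatrix_one_equiv, ← Matrix.fromBlocks_one,
          Matrix.fromBlocks_smul, smul_zero, smul_zero]
      obtain ⟨hPc, -, hRc, hQc⟩ := Matrix.fromBlocks_inj.mp hfold
      refine ⟨c0, fun x => ?_, fun x => ?_, fun x => ?_⟩
      · have hXeq : X = Matrix.toLin' (c0 • 1) := by
          rw [← hPc, Matrix.toLin'_toMatrix']
        rw [hXeq, map_smul, Matrix.toLin'_one]
        simp
      · have hWeq : W = Matrix.toLin' (c0 • 1) := by
          rw [← hQc, Matrix.toLin'_toMatrix']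
        rw [hWeq, map_smul, Matrix.toLin'_one]
        simp
      · have hZeq : Z = Matrix.toLin' 0 := by
          rw [← hRc, Matrix.toLin'_toMatrix']
        rw [hZeq, map_zero]
        simp
    -- weights
    have hcard : Fintype.card {i // β i = 0} + Fintype.card {i // ¬ β i = 0} = r := by
      rw [← Fintype.card_sum, Fintype.card_congr e, Fintype.card_fin]
    have hwT : (Module.finrank k ({i // β i = 0} → k)) • c
        + (Module.finrank k ({i // ¬ β i = 0} → k)) • c = 0 := by
      rw [Module.finrank_pi, Module.finrank_pi, ← add_nsmul, hcard, nsmul_eq_mul]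
      exact hrc
    obtain ⟨X, W, Z, hbX, hbW, h1, h2, h3⟩ := key_triple
      (Module.finrank k ({i // β i = 0} → k) + Module.finrank k ({i // ¬ β i = 0} → k))
      ({i // β i = 0} → k) ({i // ¬ β i = 0} → k) Am Dm Bm c c le_rfl hbrickT hwT
    -- matrix-level block equations
    have hm1 : LinearMap.toMatrix' X * m01 = m01 * LinearMap.toMatrix' W := by
      have hc1 : X ∘ₗ Bm = Bm ∘ₗ W := LinearMap.ext h1
      have := congrArg LinearMap.toMatrix' hc1
      rwa [LinearMap.toMatrix'_comp, LinearMap.toMatrix'_comp, hBmd,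
        LinearMap.toMatrix'_toLin'] at this
    have hm2 : LinearMap.toMatrix' X * m00 - m00 * LinearMap.toMatrix' X
        + c • LinearMap.toMatrix' X = m01 * LinearMap.toMatrix' Z := by
      have hc2 : X ∘ₗ Am - Am ∘ₗ X + c • X = Bm ∘ₗ Z := by
        refine LinearMap.ext fun x => ?_
        have := h2 x
        simpa using this
      have := congrArg LinearMap.toMatrix' hc2
      rwa [map_add, map_sub, map_smul, LinearMap.toMatrix'_comp, LinearMap.toMatrix'_comp,
        LinearMap.toMatrix'_comp, hAmd, hBmd, LinearMap.toMatrix'_toLin',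
        LinearMap.toMatrix'_toLin'] at this
    have hm3 : LinearMap.toMatrix' W * m11 - m11 * LinearMap.toMatrix' W
        + c • LinearMap.toMatrix' W + LinearMap.toMatrix' Z * m01 = 0 := by
      have hc3 : W ∘ₗ Dm - Dm ∘ₗ W + c • W + Z ∘ₗ Bm = 0 := by
        refine LinearMap.ext fun x => ?_
        have := h3 x
        simp only [LinearMap.add_apply, LinearMap.sub_apply, LinearMap.comp_apply,
          LinearMap.smul_apply, LinearMap.zero_apply]
        linear_combination (norm := module) this
      have := congrArg LinearMap.toMatrix' hc3
      rwa [map_add, map_add, map_sub, map_smul, LinearMap.toMatrix'_comp,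
        LinearMap.toMatrix'_comp, LinearMap.toMatrix'_comp, hBmd, hDmd,
        LinearMap.toMatrix'_toLin', LinearMap.toMatrix'_toLin', map_zero] at this
    have E2 : LinearMap.toMatrix' X * (m00 + c • 1) - m00 * LinearMap.toMatrix' X
        = m01 * LinearMap.toMatrix' Z := by
      rw [Matrix.mul_add, Matrix.mul_smul, mul_one, ← hm2]
      abel
    have E3 : LinearMap.toMatrix' Z * m01 + LinearMap.toMatrix' W * (m11 + c • 1)
        - m11 * LinearMap.toMatrix' W = 0 := by
      rw [Matrix.mul_add, Matrix.mul_smul, mul_one, ← hm3]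
      abel
    have hS : CuspHom β (M + c • 1) M ((Matrix.fromBlocks (LinearMap.toMatrix' X) 0
        (LinearMap.toMatrix' Z) (LinearMap.toMatrix' W)).submatrix ⇑e.symm ⇑e.symm) :=
      hom_of_blocks β e he0 he1 (M + c • 1) M (m00 + c • 1) m00 m01 m01 (m11 + c • 1) m11
        (LinearMap.toMatrix' X) (LinearMap.toMatrix' Z) (LinearMap.toMatrix' W)
        hMcdec hMdec hm1 E2 E3
    -- inverse morphism
    set Xe := LinearEquiv.ofBijective X hbX with hXed
    set We := LinearEquiv.ofBijective W hbW with hWed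
    set Xi := Xe.symm.toLinearMap with hXid
    set Wi := We.symm.toLinearMap with hWid
    have hXX' : ∀ v, X (Xi v) = v := fun v => Xe.apply_symm_apply v
    have hX'X : ∀ v, Xi (X v) = v := fun v => Xe.symm_apply_apply v
    have hWW' : ∀ v, W (Wi v) = v := fun v => We.apply_symm_apply v
    have hW'W : ∀ v, Wi (W v) = v := fun v => We.symm_apply_apply v
    have c11 : LinearMap.toMatrix' X * LinearMap.toMatrix' Xi = 1 := by
      rw [← LinearMap.toMatrix'_comp]
      rw [show X ∘ₗ Xi = LinearMap.id from LinearMap.ext fun v => hXX' v]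
      exact LinearMap.toMatrix'_id
    have c11' : LinearMap.toMatrix' Xi * LinearMap.toMatrix' X = 1 := by
      rw [← LinearMap.toMatrix'_comp]
      rw [show Xi ∘ₗ X = LinearMap.id from LinearMap.ext fun v => hX'X v]
      exact LinearMap.toMatrix'_id
    have c22 : LinearMap.toMatrix' W * LinearMap.toMatrix' Wi = 1 := by
      rw [← LinearMap.toMatrix'_comp]
      rw [show W ∘ₗ Wi = LinearMap.id from LinearMap.ext fun v => hWW' v]
      exact LinearMap.toMatrix'_id
    have c22' : LinearMap.toMatrix' Wi * LinearMap.toMatrix' W = 1 := by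
      rw [← LinearMap.toMatrix'_comp]
      rw [show Wi ∘ₗ W = LinearMap.id from LinearMap.ext fun v => hW'W v]
      exact LinearMap.toMatrix'_id
    have c21 : LinearMap.toMatrix' Z * LinearMap.toMatrix' Xi
        + LinearMap.toMatrix' W * LinearMap.toMatrix'
          (-(Wi ∘ₗ (Z ∘ₗ Xi))) = 0 := by
      rw [← LinearMap.toMatrix'_comp, ← LinearMap.toMatrix'_comp, ← map_add]
      rw [show Z ∘ₗ Xi
          + W ∘ₗ (-(Wi ∘ₗ (Z ∘ₗ Xi))) = 0 from by
        refine LinearMap.ext fun v => ?_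
        simp [hWW']]
      exact map_zero _
    have c21' : LinearMap.toMatrix'
          (-(Wi ∘ₗ (Z ∘ₗ Xi))) * LinearMap.toMatrix' X
        + LinearMap.toMatrix' Wi * LinearMap.toMatrix' Z = 0 := by
      rw [← LinearMap.toMatrix'_comp, ← LinearMap.toMatrix'_comp, ← map_add]
      rw [show (-(Wi ∘ₗ (Z ∘ₗ Xi))) ∘ₗ X
          + Wi ∘ₗ Z = 0 from by
        refine LinearMap.ext fun v => ?_
        simp [hX'X]]
      exact map_zero _
    have hST : (Matrix.fromBlocks (LinearMap.toMatrix' X) 0 (LinearMap.toMatrix' Z)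
          (LinearMap.toMatrix' W)).submatrix ⇑e.symm ⇑e.symm
        * (Matrix.fromBlocks (LinearMap.toMatrix' Xi) 0
          (LinearMap.toMatrix' (-(Wi ∘ₗ (Z ∘ₗ Xi))))
          (LinearMap.toMatrix' Wi)).submatrix ⇑e.symm ⇑e.symm = 1 := by
      rw [Matrix.submatrix_mul_equiv, Matrix.fromBlocks_multiply]
      simp only [Matrix.zero_mul, Matrix.mul_zero, add_zero, zero_add, c11, c21, c22]
      rw [Matrix.fromBlocks_one, Matrix.submatrix_one_equiv]
    have hTS : (Matrix.fromBlocks (LinearMap.toMatrix' Xi) 0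
          (LinearMap.toMatrix' (-(Wi ∘ₗ (Z ∘ₗ Xi))))
          (LinearMap.toMatrix' Wi)).submatrix ⇑e.symm ⇑e.symm
        * (Matrix.fromBlocks (LinearMap.toMatrix' X) 0 (LinearMap.toMatrix' Z)
          (LinearMap.toMatrix' W)).submatrix ⇑e.symm ⇑e.symm = 1 := by
      rw [Matrix.submatrix_mul_equiv, Matrix.fromBlocks_multiply]
      simp only [Matrix.zero_mul, Matrix.mul_zero, add_zero, zero_add, c11', c21', c22']
      rw [Matrix.fromBlocks_one, Matrix.submatrix_one_equiv]
    have hT : CuspHom β M (M + c • 1) ((Matrix.fromBlocks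
          (LinearMap.toMatrix' Xi) 0
          (LinearMap.toMatrix' (-(Wi ∘ₗ (Z ∘ₗ Xi))))
          (LinearMap.toMatrix' Wi)).submatrix ⇑e.symm ⇑e.symm) :=
      hom_inverse β (M + c • 1) M _ _ hS
        (lower_of_blocks β e he0 he1 _ _ _) hST hTS
    exact ⟨_, _, hS, hT, hST, hTS⟩
  · -- characteristic zero consequence
    haveI := hchar
    have h0 := cusp_equiv_imp β M c h
    have hr0 : (r : k) ≠ 0 := Nat.cast_ne_zero.mpr (by omega)
    exact (mul_eq_zero.mp h0).resolve_left hr0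
end
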